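/- arXiv:1801.00328 — 3 statements merged into one kernel-verified Lean document; each statement's English description precedes it below -/
import Mathlib

section
/- Both leaf edges (edges incident to an endpoint) of a non-crossing spanning path of a set of points in convex position in the plane are boundary edges of the convex hull. -/
namespace PG

/-- The `k`-th vertex (mod `n`) of the convex polygon. -/
def pt (n : ℕ) (hn : 0 < n) (k : ℕ) : Fin n := ⟨k % n, Nat.mod_lt _ hn⟩

/-- `e` is a boundary (convex hull) edge of the convex `n`-gon. -/
def IsHullEdge {n : ℕ} (e : Sym2 (Fin n)) : Prop :=
  ∃ a b : Fin n, e = s(a, b) ∧ ((a.val + 1) % n = b.val ∨ (b.val + 1) % n = a.val)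

instance {n : ℕ} : DecidablePred (IsHullEdge (n := n)) := fun _ => by
  unfold IsHullEdge; infer_instance

/-- Two chords of the convex `n`-gon cross (intersect in interior points):
their endpoint pairs are all distinct and separate each other in the cyclic order. -/
def Crosses {n : ℕ} (e f : Sym2 (Fin n)) : Prop :=
  ∃ a b c d : Fin n, e = s(a, b) ∧ f = s(c, d) ∧
    a ≠ b ∧ c ≠ d ∧ a ≠ c ∧ a ≠ d ∧ b ≠ c ∧ b ≠ d ∧
    (((c.val + n - a.val) % n < (b.val + n - a.val) % n) ↔
      ¬((d.val + n - a.val) % n < (b.val + n - a.val) % n))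

instance {n : ℕ} (e f : Sym2 (Fin n)) : Decidable (Crosses e f) := by
  unfold Crosses; infer_instance

/-- The edge set of the spanning path visiting the points in the order given
by the permutation `p`. -/
def pathEdges {n : ℕ} (p : Equiv.Perm (Fin n)) : Finset (Sym2 (Fin n)) :=
  Finset.univ.filter (fun e => ∃ i j : Fin n, e = s(p i, p j) ∧ j.val = i.val + 1)

/-- `E` is the edge set of a non-crossing (plane) spanning path. -/
def IsNCPath {n : ℕ} (E : Finset (Sym2 (Fin n))) : Prop :=
  (∃ p : Equiv.Perm (Fin n), E = pathEdges p) ∧ ∀ e ∈ E, ∀ f ∈ E, ¬ Crosses e f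

instance {n : ℕ} : DecidablePred (IsNCPath (n := n)) := fun _ => by
  unfold IsNCPath pathEdges; infer_instance

/-- Vertices of the path graph `G(P)`: non-crossing spanning paths. -/
def PVert (n : ℕ) := {E : Finset (Sym2 (Fin n)) // IsNCPath E}

instance {n : ℕ} : Fintype (PVert n) := Subtype.fintype _
instance {n : ℕ} : DecidableEq (PVert n) := Subtype.instDecidableEq

/-- The path graph `G(P)`: two plane spanning paths are adjacent iff their
edge sets differ in exactly two edges. -/
def pathGraph (n : ℕ) : SimpleGraph (PVert n) where
  Adj u v := u ≠ v ∧ (u.1 \ v.1 ∪ v.1 \ u.1).card = 2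
  symm := by constructor; rintro u v ⟨h1, h2⟩; exact ⟨h1.symm, by rwa [Finset.union_comm]⟩
  loopless := by constructor; rintro u ⟨h, _⟩; exact h rfl

instance {n : ℕ} : DecidableRel (pathGraph n).Adj := fun u v => by
  unfold pathGraph; infer_instance

/-- `v` is a boundary path: all its edges are hull edges. -/
def IsBoundary {n : ℕ} (v : PVert n) : Prop := ∀ e ∈ v.1, IsHullEdge e

/-- Number of diagonals (the level) of a path. -/
def diagCount {n : ℕ} (v : PVert n) : ℕ :=
  (v.1.filter (fun e => ¬ IsHullEdge e)).card

/-- Degree of a point in an edge set. -/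
def degIn {n : ℕ} (E : Finset (Sym2 (Fin n))) (x : Fin n) : ℕ :=
  (E.filter (fun e => x ∈ e)).card


lemma modsub (n x y : ℕ) (hx : x < n) (hy : y < n) :
    (x + n - y) % n = if y ≤ x then x - y else x + n - y := by
  split
  · have h1 : x + n - y = (x - y) + n := by omega
    rw [h1, Nat.add_mod_right, Nat.mod_eq_of_lt (by omega)]
  · exact Nat.mod_eq_of_lt (by omega)

lemma mem_pathEdges {n : ℕ} (p : Equiv.Perm (Fin n)) (i j : Fin n)
    (h : j.val = i.val + 1) : s(p i, p j) ∈ pathEdges p := by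
  simp only [pathEdges, Finset.mem_filter, Finset.mem_univ, true_and]
  exact ⟨i, j, rfl, h⟩

lemma first_hull (n : ℕ) (hn : 3 ≤ n) (p : Equiv.Perm (Fin n))
    (hnc : ∀ e ∈ pathEdges p, ∀ f ∈ pathEdges p, ¬ Crosses e f) :
    IsHullEdge (s(p ⟨0, Nat.lt_of_lt_of_le (Nat.zero_lt_succ 2) hn⟩,
      p ⟨1, Nat.lt_of_lt_of_le (Nat.succ_lt_succ (Nat.zero_lt_succ 1)) hn⟩)) := by
  set a : Fin n := p ⟨0, by omega⟩ with ha
  set b : Fin n := p ⟨1, by omega⟩ with hb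
  have hpne : ∀ i j : Fin n, i.val ≠ j.val → p i ≠ p j := by
    intro i j h hc
    exact h (congrArg Fin.val (p.injective hc))
  have hab : a ≠ b := hpne _ _ (by simp <;> omega)
  have havn : a.val < n := a.isLt
  have hbvn : b.val < n := b.isLt
  have habv : a.val ≠ b.val := fun h => hab (Fin.ext h)
  set m := (b.val + n - a.val) % n with hm
  have hmval : m = if a.val ≤ b.val then b.val - a.val else b.val + n - a.val :=
    modsub n b.val a.val hbvn havn
  have hm0 : m ≠ 0 := by rw [hmval]; split <;> omega
  -- it suffices that m = 1 or m = n - 1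
  suffices hkey : m = 1 ∨ m = n - 1 by
    refine ⟨a, b, rfl, ?_⟩
    rcases hkey with h1 | h1
    · left
      rw [hmval] at h1
      rcases Nat.lt_or_ge (a.val + 1) n with h2 | h2
      · rw [Nat.mod_eq_of_lt h2]; split at h1 <;> omega
      · have h3 : a.val + 1 = n := by omega
        rw [h3, Nat.mod_self]; split at h1 <;> omega
    · right
      rw [hmval] at h1
      rcases Nat.lt_or_ge (b.val + 1) n with h2 | h2
      · rw [Nat.mod_eq_of_lt h2]; split at h1 <;> omega
      · have h3 : b.val + 1 = n := by omega
        rw [h3, Nat.mod_self]; split at h1 <;> omega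
  by_contra hkey
  push_neg at hkey
  have hm2 : 2 ≤ m ∧ m ≤ n - 2 := by
    refine ⟨by omega, ?_⟩
    rw [hmval] at hkey ⊢
    split at hkey <;> split <;> omega
  -- all vertices from position 2 onward are on the same side of the chord
  have step : ∀ k (h2 : 2 ≤ k) (hk1 : k + 1 < n),
      (((p ⟨k, by omega⟩).val + n - a.val) % n < m ↔
       ((p ⟨k + 1, hk1⟩).val + n - a.val) % n < m) := by
    intro k h2 hk1
    set c : Fin n := p ⟨k, by omega⟩ with hc
    set d : Fin n := p ⟨k + 1, hk1⟩ with hd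
    have hcr := hnc _ (mem_pathEdges p ⟨0, by omega⟩ ⟨1, by omega⟩ rfl)
      _ (mem_pathEdges p ⟨k, by omega⟩ ⟨k + 1, hk1⟩ rfl)
    have hni : ¬ (((c.val + n - a.val) % n < m) ↔ ¬((d.val + n - a.val) % n < m)) := by
      intro hiff
      exact hcr ⟨a, b, c, d, rfl, rfl, hab,
        hpne _ _ (by simp <;> omega), hpne _ _ (by simp <;> omega),
        hpne _ _ (by simp <;> omega), hpne _ _ (by simp <;> omega),
        hpne _ _ (by simp <;> omega), hiff⟩
    tauto
  have const : ∀ k (h2 : 2 ≤ k), ∀ hk : k < n,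
      (((p ⟨k, hk⟩).val + n - a.val) % n < m ↔
       ((p ⟨2, by omega⟩).val + n - a.val) % n < m) := by
    intro k h2
    induction k, h2 using Nat.le_induction with
    | base => intro hk; exact Iff.rfl
    | succ k hk2 ih =>
      intro hk1
      exact ((step k hk2 hk1).symm).trans (ih (by omega))
  -- the two neighbours of a on the hull lie on opposite sides
  set x : Fin n := ⟨(a.val + 1) % n, Nat.mod_lt _ (by omega)⟩ with hx
  set y : Fin n := ⟨(a.val + n - 1) % n, Nat.mod_lt _ (by omega)⟩ with hy
  have hxv : x.val = (a.val + 1) % n := by rw [hx]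
  have hyv : y.val = (a.val + n - 1) % n := by rw [hy]
  have hxval : (a.val + 1) % n = if a.val + 1 < n then a.val + 1 else 0 := by
    split
    · exact Nat.mod_eq_of_lt (by omega)
    · have h3 : a.val + 1 = n := by omega
      rw [h3, Nat.mod_self]
  have hyval : (a.val + n - 1) % n = if a.val = 0 then n - 1 else a.val - 1 := by
    split
    · rename_i h3
      rw [h3]
      simp only [Nat.zero_add]
      exact Nat.mod_eq_of_lt (by omega)
    · have h3 : a.val + n - 1 = (a.val - 1) + n := by omega
      rw [h3, Nat.add_mod_right]
      exact Nat.mod_eq_of_lt (by omega)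
  have hfx : (x.val + n - a.val) % n = 1 := by
    rw [modsub n x.val a.val x.isLt havn, hxv, hxval]
    split <;> split <;> omega
  have hfy : (y.val + n - a.val) % n = n - 1 := by
    rw [modsub n y.val a.val y.isLt havn, hyv, hyval]
    split <;> split <;> omega
  have hfa : (a.val + n - a.val) % n = 0 := by
    rw [modsub n a.val a.val havn havn]
    simp
  have hxa : x ≠ a := fun h => by rw [h, hfa] at hfx; omega
  have hxb : x ≠ b := fun h => by rw [h, ← hm] at hfx; omega
  have hya : y ≠ a := fun h => by rw [h, hfa] at hfy; omega
  have hyb : y ≠ b := fun h => by rw [h, ← hm] at hfy; omega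
  -- positions of x and y are ≥ 2
  have hpos : ∀ z : Fin n, z ≠ a → z ≠ b → 2 ≤ (p.symm z).val := by
    intro z hza hzb
    by_contra h
    push_neg at h
    have h0 : (p.symm z).val = 0 ∨ (p.symm z).val = 1 := by omega
    rcases h0 with h1 | h1
    · exact hza ((p.apply_symm_apply z).symm.trans (congrArg p (Fin.ext h1)))
    · exact hzb ((p.apply_symm_apply z).symm.trans (congrArg p (Fin.ext h1)))
  have hcx := const (p.symm x).val (hpos x hxa hxb) (p.symm x).isLt
  have hcy := const (p.symm y).val (hpos y hya hyb) (p.symm y).isLt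
  simp only [Fin.eta, Equiv.apply_symm_apply] at hcx hcy
  rw [hfx] at hcx
  rw [hfy] at hcy
  have hfinal := hcx.trans hcy.symm
  have h1m : 1 < m := by omega
  have := hfinal.mp h1m
  omega

lemma pathEdges_rev (n : ℕ) (p : Equiv.Perm (Fin n)) :
    pathEdges (Fin.revPerm.trans p) = pathEdges p := by
  ext e
  simp only [pathEdges, Finset.mem_filter, Finset.mem_univ, true_and,
    Equiv.trans_apply, Fin.revPerm_apply]
  constructor
  · rintro ⟨i, j, rfl, hij⟩
    refine ⟨j.rev, i.rev, Sym2.eq_swap, ?_⟩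
    have hj := j.isLt
    simp only [Fin.val_rev]
    omega
  · rintro ⟨i, j, rfl, hij⟩
    refine ⟨j.rev, i.rev, by rw [Fin.rev_rev, Fin.rev_rev]; exact Sym2.eq_swap, ?_⟩
    have hj := j.isLt
    simp only [Fin.val_rev]
    omega

/-- Both leaf edges of a non-crossing spanning path of a convex point set
are boundary edges of the convex hull. -/
theorem leaf_edges_are_hull_edges (n : ℕ) (hn : 3 ≤ n) (p : Equiv.Perm (Fin n))
    (hnc : ∀ e ∈ pathEdges p, ∀ f ∈ pathEdges p, ¬ Crosses e f) :
    IsHullEdge (s(p ⟨0, by omega⟩, p ⟨1, by omega⟩)) ∧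
    IsHullEdge (s(p ⟨n - 2, by omega⟩, p ⟨n - 1, by omega⟩)) := by
  constructor
  · exact first_hull n hn p hnc
  · have hnc2 : ∀ e ∈ pathEdges (Fin.revPerm.trans p),
        ∀ f ∈ pathEdges (Fin.revPerm.trans p), ¬ Crosses e f := by
      rw [pathEdges_rev]; exact hnc
    have h := first_hull n hn (Fin.revPerm.trans p) hnc2
    have h0 : (Fin.revPerm.trans p) ⟨0, by omega⟩ = p ⟨n - 1, by omega⟩ := by
      refine congrArg p ?_
      ext
      rw [Fin.revPerm_apply, Fin.val_rev]
    have h1 : (Fin.revPerm.trans p) ⟨1, by omega⟩ = p ⟨n - 2, by omega⟩ := by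
      refine congrArg p ?_
      ext
      rw [Fin.revPerm_apply, Fin.val_rev]
    rw [h0, h1, Sym2.eq_swap] at h
    exact h

end PG
end

section
/- Let u and v be adjacent vertices of the path graph G(P), i.e., non-crossing spanning paths differing in exactly two edges. Then every common neighbor w of u and v in G(P) satisfies exactly one of: (1) the edge set of w contains the intersection of the edge sets of u and v (plus one extra edge), or (2) the edge set of w is contained in the union of the edge sets of u and v (missing one common edge). Consequently, every edge of G(P) lies in at most two maximal cliques. -/
namespace PG

/-- A maximal clique in a graph. -/
def IsMaxClique {V : Type*} (G : SimpleGraph V) (s : Set V) : Prop :=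
  G.IsClique s ∧ ∀ t : Set V, G.IsClique t → s ⊆ t → t ⊆ s

/-! ### Auxiliary lemmas -/


lemma pathEdges_eq_image {n : ℕ} (p : Equiv.Perm (Fin n)) :
    pathEdges p = Finset.image
      (fun i : Fin (n-1) =>
        s(p ⟨i.val, by have := i.isLt; omega⟩, p ⟨i.val+1, by have := i.isLt; omega⟩))
      Finset.univ := by
  ext e
  simp only [pathEdges, Finset.mem_filter, Finset.mem_univ, true_and, Finset.mem_image]
  constructor
  · rintro ⟨i, j, rfl, hj⟩
    have hi : i.val < n - 1 := by have := j.isLt; omega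
    refine ⟨⟨i.val, hi⟩, ?_⟩
    have h1 : (⟨i.val, by omega⟩ : Fin n) = i := rfl
    have h2 : (⟨i.val + 1, by have := j.isLt; omega⟩ : Fin n) = j := Fin.eq_of_val_eq hj.symm
    simp only [h1, h2]
  · rintro ⟨i, rfl⟩
    exact ⟨⟨i.val, by have := i.isLt; omega⟩, ⟨i.val+1, by have := i.isLt; omega⟩, rfl, rfl⟩

lemma pathEdges_card {n : ℕ} (p : Equiv.Perm (Fin n)) : (pathEdges p).card = n - 1 := by
  rw [pathEdges_eq_image p,
    Finset.card_image_of_injective _ ?_, Finset.card_univ, Fintype.card_fin]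
  intro i j h
  rw [Sym2.eq_iff] at h
  rcases h with ⟨h1, h2⟩ | ⟨h1, h2⟩ <;>
  · have h1' := congrArg Fin.val (p.injective h1)
    have h2' := congrArg Fin.val (p.injective h2)
    simp only at h1' h2'
    exact Fin.eq_of_val_eq (by omega)

lemma vert_card {n : ℕ} (w : PVert n) : w.1.card = n - 1 := by
  obtain ⟨p, hp⟩ := w.2.1
  rw [hp]; exact pathEdges_card p

lemma adj_parts {n : ℕ} {u w : PVert n} (h : (pathGraph n).Adj u w) :
    (u.1 \ w.1).card = 1 ∧ (w.1 \ u.1).card = 1 := by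
  obtain ⟨hne, hcard⟩ := h
  have h1 : (u.1 \ w.1).card + (w.1 \ u.1).card = 2 := by
    rw [← Finset.card_union_of_disjoint disjoint_sdiff_sdiff]; exact hcard
  have h2 : (u.1 \ w.1).card = (w.1 \ u.1).card :=
    Finset.card_sdiff_comm (by rw [vert_card, vert_card])
  omega

lemma inter_card {n : ℕ} {u v : PVert n} (huv : (pathGraph n).Adj u v) :
    (u.1 ∩ v.1).card = n - 2 := by
  have h1 := (adj_parts huv).1
  have h2 := Finset.card_inter_add_card_sdiff u.1 v.1
  have h3 := vert_card u
  omega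

lemma union_card {n : ℕ} (hn : 3 ≤ n) {u v : PVert n} (huv : (pathGraph n).Adj u v) :
    (u.1 ∪ v.1).card = n := by
  have h1 := inter_card huv
  have h2 := Finset.card_union_add_card_inter u.1 v.1
  have h3 := vert_card u
  have h4 := vert_card v
  omega

/-- The key dichotomy for a common neighbor. -/
lemma xor_lemma {n : ℕ} {u v w : PVert n}
    (huv : (pathGraph n).Adj u v) (hu : (pathGraph n).Adj u w)
    (hv : (pathGraph n).Adj v w) :
    Xor' (u.1 ∩ v.1 ⊆ w.1) (w.1 ⊆ u.1 ∪ v.1) := by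
  obtain ⟨e, he⟩ := Finset.card_eq_one.mp (adj_parts huv).1
  obtain ⟨a, ha⟩ := Finset.card_eq_one.mp (adj_parts hu).1
  obtain ⟨b, hb⟩ := Finset.card_eq_one.mp (adj_parts hu).2
  have hau : a ∈ u.1 ∧ a ∉ w.1 := by
    have : a ∈ u.1 \ w.1 := ha ▸ Finset.mem_singleton_self a
    exact Finset.mem_sdiff.mp this
  have heu : e ∈ u.1 ∧ e ∉ v.1 := by
    have : e ∈ u.1 \ v.1 := he ▸ Finset.mem_singleton_self e
    exact Finset.mem_sdiff.mp this
  have hbw : b ∈ w.1 ∧ b ∉ u.1 := by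
    have : b ∈ w.1 \ u.1 := hb ▸ Finset.mem_singleton_self b
    exact Finset.mem_sdiff.mp this
  by_cases hav : a ∈ v.1
  · -- the edge removed from `u` is a common edge: `w ⊆ u ∪ v`, `u ∩ v ⊄ w`
    right
    have hew : e ∈ w.1 := by
      by_contra hew
      have : e ∈ u.1 \ w.1 := Finset.mem_sdiff.mpr ⟨heu.1, hew⟩
      rw [ha, Finset.mem_singleton] at this
      exact heu.2 (this ▸ hav)
    constructor
    · intro x hx
      by_cases hxv : x ∈ v.1
      · exact Finset.mem_union_right _ hxv
      · -- x ∈ w \ v = {e}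
        obtain ⟨c, hc⟩ := Finset.card_eq_one.mp (adj_parts hv).2
        have hxc : x ∈ w.1 \ v.1 := Finset.mem_sdiff.mpr ⟨hx, hxv⟩
        have hec : e ∈ w.1 \ v.1 := Finset.mem_sdiff.mpr ⟨hew, heu.2⟩
        rw [hc, Finset.mem_singleton] at hxc hec
        exact Finset.mem_union_left _ ((hxc.trans hec.symm) ▸ heu.1)
    · intro hsub
      have : a ∈ w.1 := hsub (Finset.mem_inter.mpr ⟨hau.1, hav⟩)
      exact hau.2 this
  · -- the edge removed from `u` is `e`: `u ∩ v ⊆ w`, `w ⊄ u ∪ v`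
    left
    have hae : a = e := by
      have : a ∈ u.1 \ v.1 := Finset.mem_sdiff.mpr ⟨hau.1, hav⟩
      rwa [he, Finset.mem_singleton] at this
    have hIw : u.1 ∩ v.1 ⊆ w.1 := by
      intro x hx
      rw [Finset.mem_inter] at hx
      by_contra hxw
      have : x ∈ u.1 \ w.1 := Finset.mem_sdiff.mpr ⟨hx.1, hxw⟩
      rw [ha, Finset.mem_singleton] at this
      exact hav (this ▸ hx.2)
    refine ⟨hIw, fun hsub => ?_⟩
    -- then b ∈ u ∪ v; b ∉ u, so b ∈ v; we derive w = v, contradiction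
    have hbv : b ∈ v.1 := by
      rcases Finset.mem_union.mp (hsub hbw.1) with h | h
      · exact absurd h hbw.2
      · exact h
    have hwv : w.1 ⊆ v.1 := by
      intro x hx
      by_cases hxu : x ∈ u.1
      · have hxe : x ≠ e := by
          rintro rfl
          rw [← hae] at hx
          exact hau.2 hx
        by_contra hxv
        have : x ∈ u.1 \ v.1 := Finset.mem_sdiff.mpr ⟨hxu, hxv⟩
        rw [he, Finset.mem_singleton] at this
        exact hxe this
      · have : x ∈ w.1 \ u.1 := Finset.mem_sdiff.mpr ⟨hx, hxu⟩
        rw [hb, Finset.mem_singleton] at this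
        exact this ▸ hbv
    have : w.1 = v.1 :=
      Finset.eq_of_subset_of_card_le hwv (by rw [vert_card, vert_card])
    exact hv.ne (Subtype.ext this.symm)

/-- candidate maximal clique 1 -/
def Cone {n : ℕ} (u v : PVert n) : Set (PVert n) :=
  {u, v} ∪ {w | (pathGraph n).Adj u w ∧ (pathGraph n).Adj v w ∧ u.1 ∩ v.1 ⊆ w.1}

/-- candidate maximal clique 2 -/
def Ctwo {n : ℕ} (u v : PVert n) : Set (PVert n) :=
  {u, v} ∪ {w | (pathGraph n).Adj u w ∧ (pathGraph n).Adj v w ∧ w.1 ⊆ u.1 ∪ v.1}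

lemma type1_struct {n : ℕ} (hn : 3 ≤ n) {u v w : PVert n} (huv : (pathGraph n).Adj u v)
    (hw : u.1 ∩ v.1 ⊆ w.1) :
    ∃ b ∉ u.1 ∩ v.1, w.1 = (u.1 ∩ v.1) ∪ {b} := by
  have hc : (w.1 \ (u.1 ∩ v.1)).card = 1 := by
    rw [Finset.card_sdiff_of_subset hw, vert_card, inter_card huv]; omega
  obtain ⟨b, hb⟩ := Finset.card_eq_one.mp hc
  have hbm : b ∈ w.1 \ (u.1 ∩ v.1) := hb ▸ Finset.mem_singleton_self b
  refine ⟨b, (Finset.mem_sdiff.mp hbm).2, ?_⟩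
  rw [← hb, Finset.union_sdiff_of_subset hw]

lemma type2_struct {n : ℕ} (hn : 3 ≤ n) {u v w : PVert n} (huv : (pathGraph n).Adj u v)
    (hw : w.1 ⊆ u.1 ∪ v.1) :
    ∃ x ∈ u.1 ∪ v.1, x ∉ w.1 ∧ w.1 = (u.1 ∪ v.1) \ {x} := by
  have hc : ((u.1 ∪ v.1) \ w.1).card = 1 := by
    rw [Finset.card_sdiff_of_subset hw, vert_card, union_card hn huv]; omega
  obtain ⟨x, hx⟩ := Finset.card_eq_one.mp hc
  have hxm : x ∈ (u.1 ∪ v.1) \ w.1 := hx ▸ Finset.mem_singleton_self x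
  rw [Finset.mem_sdiff] at hxm
  exact ⟨x, hxm.1, hxm.2, by rw [← hx, Finset.sdiff_sdiff_eq_self hw]⟩

lemma adj_of_card_inter {n : ℕ} (hn : 3 ≤ n) {x y : PVert n} (hne : x ≠ y)
    (h : (x.1 ∩ y.1).card = n - 2) : (pathGraph n).Adj x y := by
  refine ⟨hne, ?_⟩
  have cx := vert_card x
  have cy := vert_card y
  have h1 := Finset.card_inter_add_card_sdiff x.1 y.1
  have h2 := Finset.card_inter_add_card_sdiff y.1 x.1
  rw [Finset.inter_comm] at h2
  rw [Finset.card_union_of_disjoint disjoint_sdiff_sdiff]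
  omega

lemma cone_clique {n : ℕ} (hn : 3 ≤ n) {u v : PVert n} (huv : (pathGraph n).Adj u v) :
    (pathGraph n).IsClique (Cone u v) := by
  intro x hx y hy hne
  have key : ∀ z : PVert n,
      z ∈ ({w | (pathGraph n).Adj u w ∧ (pathGraph n).Adj v w ∧ u.1 ∩ v.1 ⊆ w.1} : Set _) →
      ∀ z' : PVert n,
      z' ∈ ({w | (pathGraph n).Adj u w ∧ (pathGraph n).Adj v w ∧ u.1 ∩ v.1 ⊆ w.1} : Set _) →
      z ≠ z' → (pathGraph n).Adj z z' := by
    intro z hz z' hz' hzz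
    obtain ⟨b, hbI, hbe⟩ := type1_struct hn huv hz.2.2
    obtain ⟨b', hbI', hbe'⟩ := type1_struct hn huv hz'.2.2
    have hbb : b ≠ b' := by
      rintro rfl; exact hzz (Subtype.ext (by rw [hbe, hbe']))
    refine adj_of_card_inter hn hzz ?_
    have : z.1 ∩ z'.1 = u.1 ∩ v.1 := by
      apply Finset.Subset.antisymm
      · intro c hc
        rw [Finset.mem_inter, hbe, hbe', Finset.mem_union, Finset.mem_union,
          Finset.mem_singleton, Finset.mem_singleton] at hc
        rcases hc.1 with h | h
        · exact h
        · rcases hc.2 with h' | h'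
          · exact h ▸ h'
          · exact absurd (h.symm.trans h') hbb
      · exact Finset.subset_inter (fun c hc => hbe ▸ Finset.mem_union_left _ hc)
          (fun c hc => hbe' ▸ Finset.mem_union_left _ hc)
    rw [this, inter_card huv]
  rcases hx with hx | hx <;> rcases hy with hy | hy
  · rcases hx with rfl | rfl <;> rcases hy with rfl | rfl
    · exact absurd rfl hne
    · exact huv
    · exact huv.symm
    · exact absurd rfl hne
  · rcases hx with rfl | rfl
    · exact hy.1
    · exact hy.2.1
  · rcases hy with rfl | rfl
    · exact hx.1.symm
    · exact hx.2.1.symm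
  · exact key x hx y hy hne

lemma ctwo_clique {n : ℕ} (hn : 3 ≤ n) {u v : PVert n} (huv : (pathGraph n).Adj u v) :
    (pathGraph n).IsClique (Ctwo u v) := by
  intro x hx y hy hne
  have key : ∀ z : PVert n,
      z ∈ ({w | (pathGraph n).Adj u w ∧ (pathGraph n).Adj v w ∧ w.1 ⊆ u.1 ∪ v.1} : Set _) →
      ∀ z' : PVert n,
      z' ∈ ({w | (pathGraph n).Adj u w ∧ (pathGraph n).Adj v w ∧ w.1 ⊆ u.1 ∪ v.1} : Set _) →
      z ≠ z' → (pathGraph n).Adj z z' := by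
    intro z hz z' hz' hzz
    obtain ⟨a, haU, haz, hae⟩ := type2_struct hn huv hz.2.2
    obtain ⟨a', haU', haz', hae'⟩ := type2_struct hn huv hz'.2.2
    have haa : a ≠ a' := by
      rintro rfl; exact hzz (Subtype.ext (by rw [hae, hae']))
    refine adj_of_card_inter hn hzz ?_
    have h1 : z.1 ∩ z'.1 = (u.1 ∪ v.1) \ {a, a'} := by
      rw [hae, hae']
      ext c
      simp only [Finset.mem_inter, Finset.mem_sdiff, Finset.mem_singleton,
        Finset.mem_insert]
      tauto
    rw [h1, Finset.card_sdiff_of_subset (by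
        intro c hc
        rcases Finset.mem_insert.mp hc with rfl | hc
        · exact haU
        · exact (Finset.mem_singleton.mp hc) ▸ haU'),
      Finset.card_pair haa, union_card hn huv]
  rcases hx with hx | hx <;> rcases hy with hy | hy
  · rcases hx with rfl | rfl <;> rcases hy with rfl | rfl
    · exact absurd rfl hne
    · exact huv
    · exact huv.symm
    · exact absurd rfl hne
  · rcases hx with rfl | rfl
    · exact hy.1
    · exact hy.2.1
  · rcases hy with rfl | rfl
    · exact hx.1.symm
    · exact hx.2.1.symm
  · exact key x hx y hy hne

/-- every maximal clique containing the edge `uv` is `Cone u v` or `Ctwo u v`. -/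
lemma maxclique_eq {n : ℕ} (hn : 3 ≤ n) {u v : PVert n} (huv : (pathGraph n).Adj u v)
    {s : Set (PVert n)} (hs : IsMaxClique (pathGraph n) s) (hus : u ∈ s) (hvs : v ∈ s) :
    s = Cone u v ∨ s = Ctwo u v := by
  by_cases hall : ∀ w ∈ s, w ≠ u → w ≠ v → u.1 ∩ v.1 ⊆ w.1
  · left
    have hsub : s ⊆ Cone u v := by
      intro w hw
      by_cases h1 : w = u
      · exact Or.inl (by rw [h1]; exact Set.mem_insert _ _)
      by_cases h2 : w = v
      · exact Or.inl (by rw [h2]; exact Set.mem_insert_of_mem _ rfl)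
      exact Or.inr ⟨hs.1 hus hw (fun h => h1 h.symm),
        hs.1 hvs hw (fun h => h2 h.symm), hall w hw h1 h2⟩
    exact Set.Subset.antisymm hsub (hs.2 _ (cone_clique hn huv) hsub)
  · right
    push_neg at hall
    obtain ⟨w0, hw0s, hw0u, hw0v, hw0I⟩ := hall
    have hu0 : (pathGraph n).Adj u w0 := hs.1 hus hw0s (fun h => hw0u h.symm)
    have hv0 : (pathGraph n).Adj v w0 := hs.1 hvs hw0s (fun h => hw0v h.symm)
    have hw0U : w0.1 ⊆ u.1 ∪ v.1 := by
      rcases xor_lemma huv hu0 hv0 with ⟨h, -⟩ | ⟨h, -⟩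
      · exact absurd h hw0I
      · exact h
    obtain ⟨x, hxU, hxw0, hx0⟩ := type2_struct hn huv hw0U
    have hsub : s ⊆ Ctwo u v := by
      intro w hw
      by_cases h1 : w = u
      · exact Or.inl (by rw [h1]; exact Set.mem_insert _ _)
      by_cases h2 : w = v
      · exact Or.inl (by rw [h2]; exact Set.mem_insert_of_mem _ rfl)
      have hadu : (pathGraph n).Adj u w := hs.1 hus hw (fun h => h1 h.symm)
      have hadv : (pathGraph n).Adj v w := hs.1 hvs hw (fun h => h2 h.symm)
      refine Or.inr ⟨hadu, hadv, ?_⟩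
      rcases xor_lemma huv hadu hadv with ⟨hIw, hnsub⟩ | ⟨h, -⟩
      · -- type-1 member: contradiction with w0
        exfalso
        obtain ⟨b, hbI, hbe⟩ := type1_struct hn huv hIw
        have hbU : b ∉ u.1 ∪ v.1 := by
          intro hbU
          apply hnsub
          rw [hbe]
          intro c hc
          rcases Finset.mem_union.mp hc with hc | hc
          · exact Finset.mem_union_left _ (Finset.mem_inter.mp hc).1
          · exact (Finset.mem_singleton.mp hc) ▸ hbU
        have hww0 : w ≠ w0 := by
          rintro rfl; exact hw0I hIw
        have hadj : (pathGraph n).Adj w w0 := hs.1 hw hw0s hww0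
        -- x ∈ u ∩ v: since u ∩ v ⊆ w0 fails already... derive x ∈ u.1 ∩ v.1 not needed;
        -- {b, x} ⊆ w.1 \ w0.1 gives card ≥ 2, contradiction with card = 1
        have hbw : b ∈ w.1 := hbe ▸ Finset.mem_union_right _ (Finset.mem_singleton_self b)
        have hxI : x ∈ u.1 ∩ v.1 := by
          by_contra hxI
          apply hw0I
          intro c hc
          have hcU : c ∈ u.1 ∪ v.1 :=
            Finset.mem_union_left _ (Finset.mem_inter.mp hc).1
          rw [hx0, Finset.mem_sdiff, Finset.mem_singleton]
          exact ⟨hcU, fun h => hxI (h ▸ hc)⟩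
        have hxw : x ∈ w.1 := hIw hxI
        have hbx : b ≠ x := fun h => hbU (h ▸ hxU)
        have hpair : ({b, x} : Finset (Sym2 (Fin n))) ⊆ w.1 \ w0.1 := by
          intro c hc
          rcases Finset.mem_insert.mp hc with rfl | hc
          · exact Finset.mem_sdiff.mpr ⟨hbw, fun h => hbU (hw0U h)⟩
          · rw [Finset.mem_singleton] at hc
            subst hc
            exact Finset.mem_sdiff.mpr ⟨hxw, hxw0⟩
        have := Finset.card_le_card hpair
        rw [(adj_parts hadj).1, Finset.card_pair hbx] at this
        omega
      · exact h
    exact Set.Subset.antisymm hsub (hs.2 _ (ctwo_clique hn huv) hsub)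

/-- For adjacent `u, v` in `G(P)`, every common neighbor `w` satisfies exactly one of:
its edge set contains `u ∩ v` (plus one extra edge), or is contained in `u ∪ v`
(missing one common edge).  Consequently every edge of `G(P)` lies in at most two
maximal cliques. -/
theorem common_neighbor_dichotomy (n : ℕ) (hn : 3 ≤ n) (u v : PVert n)
    (huv : (pathGraph n).Adj u v) :
    (∀ w : PVert n, (pathGraph n).Adj u w → (pathGraph n).Adj v w →
      Xor' (u.1 ∩ v.1 ⊆ w.1) (w.1 ⊆ u.1 ∪ v.1)) ∧
    (∀ s₁ s₂ s₃ : Set (PVert n),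
      IsMaxClique (pathGraph n) s₁ → u ∈ s₁ → v ∈ s₁ →
      IsMaxClique (pathGraph n) s₂ → u ∈ s₂ → v ∈ s₂ →
      IsMaxClique (pathGraph n) s₃ → u ∈ s₃ → v ∈ s₃ →
      s₁ = s₂ ∨ s₁ = s₃ ∨ s₂ = s₃) := by
  constructor
  · intro w hu hv
    exact xor_lemma huv hu hv
  · intro s1 s2 s3 h1 hu1 hv1 h2 hu2 hv2 h3 hu3 hv3
    rcases maxclique_eq hn huv h1 hu1 hv1 with e1 | e1 <;>
      rcases maxclique_eq hn huv h2 hu2 hv2 with e2 | e2 <;>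
        rcases maxclique_eq hn huv h3 hu3 hv3 with e3 | e3 <;>
          rw [e1, e2, e3] <;> tauto

end PG
end

section
/- For a set P of n ≥ 5 points in convex position, every intersection max-clique of the path graph G(P) has size 2 or 4. -/
namespace PG

/-- The intersection max-clique of adjacent `u, v`: all plane spanning paths whose
edge set is `u ∩ v` plus one extra edge. -/
def interClique {n : ℕ} (u v : PVert n) : Set (PVert n) :=
  {w | ∃ e, e ∉ u.1 ∩ v.1 ∧ w.1 = insert e (u.1 ∩ v.1)}


section Support



variable {n : ℕ}

lemma mod_sub_eq {n x y : ℕ} (hx : x < n) (hy : y < n) :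
    (x + n - y) % n = if y ≤ x then x - y else x + n - y := by
  rcases le_or_gt y x with h | h
  · rw [if_pos h]
    have h1 : x + n - y = (x - y) + n := by omega
    rw [h1, Nat.add_mod_right, Nat.mod_eq_of_lt (by omega)]
  · rw [if_neg (by omega), Nat.mod_eq_of_lt (by omega)]

/-- cyclic offset from `a` to `b` -/
def dd (n : ℕ) (a b : Fin n) : ℕ := (b.val + n - a.val) % n

lemma dd_eq (a b : Fin n) :
    dd n a b = if a.val ≤ b.val then b.val - a.val else b.val + n - a.val :=
  mod_sub_eq b.isLt a.isLt

lemma dd_lt (a b : Fin n) : dd n a b < n := Nat.mod_lt _ (by have := a.isLt; omega)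

lemma dd_eq_zero {a b : Fin n} : dd n a b = 0 ↔ a = b := by
  have ha := a.isLt; have hb := b.isLt
  rw [dd_eq, Fin.ext_iff]
  split_ifs with h <;> omega

lemma dd_inj {a b c : Fin n} (h : dd n a b = dd n a c) : b = c := by
  have := a.isLt; have := b.isLt; have := c.isLt
  rw [dd_eq, dd_eq] at h
  rw [Fin.ext_iff]
  split_ifs at h <;> omega

lemma dd_ne {a b c : Fin n} (h : b ≠ c) : dd n a b ≠ dd n a c :=
  fun hh => h (dd_inj hh)

lemma dd_rebase (a b z : Fin n) : dd n b z = (dd n a z + n - dd n a b) % n := by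
  have := a.isLt; have := b.isLt; have := z.isLt
  rw [mod_sub_eq (dd_lt a z) (dd_lt a b)]
  simp only [dd_eq]
  split_ifs <;> omega

/-- crossing condition in canonical coordinates -/
def Xp (n : ℕ) (a b c d : Fin n) : Prop :=
  (dd n a c < dd n a b ↔ ¬ (dd n a d < dd n a b))

lemma crosses_of {a b c d : Fin n} (hab : a ≠ b) (hcd : c ≠ d) (hac : a ≠ c)
    (had : a ≠ d) (hbc : b ≠ c) (hbd : b ≠ d) (h : Xp n a b c d) :
    Crosses s(a,b) s(c,d) :=
  ⟨a, b, c, d, rfl, rfl, hab, hcd, hac, had, hbc, hbd, h⟩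

lemma fin_vne {a b : Fin n} (h : a ≠ b) : a.val ≠ b.val := by
  simpa [Fin.ext_iff] using h

lemma Xp_swapR {a b c d : Fin n} : Xp n a b c d ↔ Xp n a b d c := by
  unfold Xp; tauto

lemma arc_flip {a b z : Fin n} (hab : a ≠ b) (hza : z ≠ a) (hzb : z ≠ b) :
    dd n a z < dd n a b ↔ ¬ (dd n b z < dd n b a) := by
  have := a.isLt; have := b.isLt; have := z.isLt
  have h1 := fin_vne hab; have h2 := fin_vne hza; have h3 := fin_vne hzb
  simp only [dd_eq]
  split_ifs <;> omega

lemma Xp_swapL {a b c d : Fin n} (hab : a ≠ b) (hca : c ≠ a) (hcb : c ≠ b)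
    (hda : d ≠ a) (hdb : d ≠ b) : Xp n a b c d ↔ Xp n b a c d := by
  have h1 := arc_flip hab hca hcb
  have h2 := arc_flip hab hda hdb
  unfold Xp
  constructor <;> intro h <;> tauto

lemma Xp_symm {a b c d : Fin n} (hab : a ≠ b) (hcd : c ≠ d) (hac : a ≠ c)
    (had : a ≠ d) (hbc : b ≠ c) (hbd : b ≠ d) : Xp n a b c d ↔ Xp n c d a b := by
  have := a.isLt; have := b.isLt; have := c.isLt; have := d.isLt
  have h1 := fin_vne hab; have h2 := fin_vne hcd; have h3 := fin_vne hac
  have h4 := fin_vne had; have h5 := fin_vne hbc; have h6 := fin_vne hbd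
  simp only [Xp, dd_eq]
  split_ifs <;> omega

lemma crosses_iff {a b c d : Fin n} (hab : a ≠ b) (hcd : c ≠ d) (hac : a ≠ c)
    (had : a ≠ d) (hbc : b ≠ c) (hbd : b ≠ d) :
    Crosses s(a,b) s(c,d) ↔ Xp n a b c d := by
  constructor
  · rintro ⟨a', b', c', d', he, hf, h1, h2, h3, h4, h5, h6, hX⟩
    rw [Sym2.eq_iff] at he hf
    have hX' : Xp n a' b' c' d' := hX
    rcases he with ⟨rfl, rfl⟩ | ⟨rfl, rfl⟩ <;> rcases hf with ⟨rfl, rfl⟩ | ⟨rfl, rfl⟩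
    · exact hX'
    · exact Xp_swapR.mpr hX'
    · exact (Xp_swapL h1 h3.symm h5.symm h4.symm h6.symm).mp hX'
    · exact (Xp_swapL h1 h4.symm h6.symm h3.symm h5.symm).mp (Xp_swapR.mpr hX')
  · exact crosses_of hab hcd hac had hbc hbd

lemma crosses_ne {e f : Sym2 (Fin n)} (h : Crosses e f) {z w : Fin n}
    (hz : z ∈ e) (hw : w ∈ f) : z ≠ w := by
  obtain ⟨a, b, c, d, rfl, rfl, h1, h2, h3, h4, h5, h6, -⟩ := h
  rw [Sym2.mem_iff] at hz hw
  rcases hz with rfl | rfl <;> rcases hw with rfl | rfl <;> assumption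

lemma crosses_irrefl (e : Sym2 (Fin n)) : ¬ Crosses e e := by
  intro h
  induction e using Sym2.ind with
  | _ x y => exact crosses_ne h (Sym2.mem_mk_left x y) (Sym2.mem_mk_left x y) rfl

lemma crosses_comm {e f : Sym2 (Fin n)} (h : Crosses e f) : Crosses f e := by
  obtain ⟨a, b, c, d, rfl, rfl, h1, h2, h3, h4, h5, h6, hX⟩ := h
  exact ⟨c, d, a, b, rfl, rfl, h2, h1, h3.symm, h5.symm, h4.symm, h6.symm,
    (Xp_symm h1 h2 h3 h4 h5 h6).mp hX⟩






variable {n : ℕ}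

/-- the `k`-th vertex of the path given by `p` -/
def vtx (hn : 0 < n) (p : Equiv.Perm (Fin n)) (k : ℕ) : Fin n :=
  p ⟨k % n, Nat.mod_lt _ hn⟩

lemma vtx_eq (hn : 0 < n) (p : Equiv.Perm (Fin n)) {k : ℕ} (h : k < n) :
    vtx hn p k = p ⟨k, h⟩ := by
  unfold vtx
  congr 1
  exact Fin.ext (Nat.mod_eq_of_lt h)

lemma vtx_inj (hn : 0 < n) (p : Equiv.Perm (Fin n)) {a b : ℕ} (ha : a < n)
    (hb : b < n) : vtx hn p a = vtx hn p b ↔ a = b := by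
  rw [vtx_eq hn p ha, vtx_eq hn p hb]
  constructor
  · intro h
    have := p.injective h
    simpa [Fin.ext_iff] using this
  · rintro rfl; rfl

lemma symm_vtx (hn : 0 < n) (p : Equiv.Perm (Fin n)) {k : ℕ} (h : k < n) :
    (p.symm (vtx hn p k)).val = k := by
  rw [vtx_eq hn p h, Equiv.symm_apply_apply]

lemma vtx_symm (hn : 0 < n) (p : Equiv.Perm (Fin n)) (z : Fin n) :
    vtx hn p (p.symm z).val = z := by
  rw [vtx_eq hn p (p.symm z).isLt]
  simp

lemma mem_pathEdges_s3 (hn : 0 < n) (p : Equiv.Perm (Fin n)) (e : Sym2 (Fin n)) :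
    e ∈ pathEdges p ↔ ∃ k, k + 1 < n ∧ e = s(vtx hn p k, vtx hn p (k+1)) := by
  unfold pathEdges
  simp only [Finset.mem_filter, Finset.mem_univ, true_and]
  constructor
  · rintro ⟨i, j, rfl, hj⟩
    have hj1 : i.val + 1 < n := hj ▸ j.isLt
    refine ⟨i.val, hj1, ?_⟩
    rw [vtx_eq hn p i.isLt, vtx_eq hn p hj1]
    exact congrArg₂ (fun x y => s(p x, p y)) (Fin.ext rfl) (Fin.ext hj)
  · rintro ⟨k, hk, rfl⟩
    refine ⟨⟨k, by omega⟩, ⟨k+1, hk⟩, ?_, rfl⟩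
    rw [vtx_eq hn p (by omega : k < n), vtx_eq hn p hk]

lemma edge_inj (hn : 0 < n) (p : Equiv.Perm (Fin n)) {a b : ℕ} (ha : a + 1 < n)
    (hb : b + 1 < n)
    (h : s(vtx hn p a, vtx hn p (a+1)) = s(vtx hn p b, vtx hn p (b+1))) : a = b := by
  rw [Sym2.eq_iff] at h
  rcases h with ⟨h1, _⟩ | ⟨h1, h2⟩
  · exact (vtx_inj hn p (by omega) (by omega)).mp h1
  · have e1 := (vtx_inj hn p (by omega) (by omega)).mp h1
    have e2 := (vtx_inj hn p (by omega) (by omega)).mp h2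
    omega

lemma card_pathEdges (hn : 0 < n) (p : Equiv.Perm (Fin n)) :
    (pathEdges p).card = n - 1 := by
  have : pathEdges p =
      (Finset.range (n-1)).image (fun k => s(vtx hn p k, vtx hn p (k+1))) := by
    ext e
    rw [mem_pathEdges_s3 hn p]
    simp only [Finset.mem_image, Finset.mem_range]
    constructor
    · rintro ⟨k, hk, rfl⟩; exact ⟨k, by omega, rfl⟩
    · rintro ⟨k, hk, rfl⟩; exact ⟨k, by omega, rfl⟩
  rw [this, Finset.card_image_of_injOn, Finset.card_range]
  intro a ha b hb h
  simp only [Finset.coe_range, Set.mem_Iio] at ha hb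
  exact edge_inj hn p (by omega) (by omega) h

lemma edges_at (hn : 0 < n) (q : Equiv.Perm (Fin n)) (z : Fin n) (e : Sym2 (Fin n))
    (he : e ∈ pathEdges q) (hz : z ∈ e) :
    ∃ a, a + 1 < n ∧ e = s(vtx hn q a, vtx hn q (a+1)) ∧
      (a = (q.symm z).val ∨ a + 1 = (q.symm z).val) := by
  obtain ⟨a, ha, rfl⟩ := (mem_pathEdges_s3 hn q e).mp he
  refine ⟨a, ha, rfl, ?_⟩
  rw [Sym2.mem_iff] at hz
  rcases hz with rfl | rfl
  · left; rw [symm_vtx hn q (by omega)]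
  · right; rw [symm_vtx hn q ha]

lemma flip_exists (f : ℕ → Bool) {a b : ℕ} (hab : a ≤ b) (hf : f a ≠ f b) :
    ∃ t, a ≤ t ∧ t < b ∧ f t ≠ f (t+1) := by
  by_contra hc
  push_neg at hc
  have key : ∀ m, a ≤ m → m ≤ b → f m = f a := by
    intro m
    induction m with
    | zero =>
      intro h1 _
      have h0 : a = 0 := by omega
      exact congrArg f h0.symm
    | succ k ih =>
      intro h1 h2
      rcases Nat.lt_or_ge k (a : ℕ) with h3 | h3
      · have : a = k + 1 := by omega
        exact congrArg f this.symm
      · rw [← hc k h3 (by omega)]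
        exact ih h3 (by omega)
  exact hf (key b hab le_rfl).symm




variable {n : ℕ}

lemma dd_ofAdd (hn : 0 < n) (a : Fin n) (t : ℕ) (ht : t < n) :
    dd n a ⟨(a.val + t) % n, Nat.mod_lt _ hn⟩ = t := by
  have ha := a.isLt
  unfold dd
  simp only
  rcases Nat.lt_or_ge (a.val + t) n with h | h
  · rw [Nat.mod_eq_of_lt h]
    have h1 : a.val + t + n - a.val = t + n := by omega
    rw [h1, Nat.add_mod_right, Nat.mod_eq_of_lt ht]
  · have h0 : (a.val + t) % n = a.val + t - n := by
      rw [Nat.mod_eq_sub_mod h, Nat.mod_eq_of_lt (by omega)]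
    rw [h0]
    have h1 : a.val + t - n + n - a.val = t := by omega
    rw [h1, Nat.mod_eq_of_lt ht]

lemma prefix_arc (hn : 0 < n) (p : Equiv.Perm (Fin n))
    (hNC : ∀ e ∈ pathEdges p, ∀ f ∈ pathEdges p, ¬ Crosses e f) :
    ∀ k, k ≤ n - 2 → ∃ α : Fin n, ∀ z : Fin n, ((p.symm z).val ≤ k ↔ dd n α z ≤ k) := by
  intro k
  induction k with
  | zero =>
    intro _
    refine ⟨vtx hn p 0, fun z => ?_⟩
    rw [Nat.le_zero, Nat.le_zero, dd_eq_zero]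
    constructor
    · intro h
      rw [← h, vtx_symm]
    · intro h
      rw [← h, symm_vtx hn p hn]
  | succ k ih =>
    intro hk1
    obtain ⟨α, hα⟩ := ih (by omega)
    have hn2 : k + 1 < n := by omega
    have hsx : (p.symm (vtx hn p (k+1))).val = k + 1 := symm_vtx hn p hn2
    have hdx_gt : k + 1 ≤ dd n α (vtx hn p (k+1)) := by
      by_contra h
      push_neg at h
      have := (hα (vtx hn p (k+1))).mpr (by omega)
      omega
    have hdx_lt : dd n α (vtx hn p (k+1)) < n := dd_lt _ _
    rcases eq_or_lt_of_le hdx_gt with heq | hlt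
    · -- new point is at offset k+1 from α
      refine ⟨α, fun z => ?_⟩
      constructor
      · intro h
        rcases Nat.lt_or_ge (p.symm z).val (k+1) with h2 | h2
        · exact le_trans ((hα z).mp (by omega)) (by omega)
        · have hz : (p.symm z).val = k + 1 := by omega
          have hzx : z = vtx hn p (k+1) := by rw [← hz, vtx_symm]
          rw [hzx, ← heq]
      · intro h
        rcases Nat.lt_or_ge (dd n α z) (k+1) with h2 | h2
        · have := (hα z).mpr (by omega); omega
        · have hz : dd n α z = dd n α (vtx hn p (k+1)) := by omega
          have hzx : z = vtx hn p (k+1) := dd_inj hz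
          rw [hzx, hsx]
    · by_cases hcase : dd n α (vtx hn p (k+1)) = n - 1
      · -- new point just before α; rebase at it
        refine ⟨vtx hn p (k+1), fun z => ?_⟩
        have key : ∀ w : Fin n, dd n (vtx hn p (k+1)) w = (dd n α w + n - (n-1)) % n := by
          intro w
          rw [dd_rebase α, hcase]
        constructor
        · intro h
          rcases Nat.lt_or_ge (p.symm z).val (k+1) with h2 | h2
          · have hz := (hα z).mp (by omega)
            have : dd n (vtx hn p (k+1)) z = dd n α z + 1 := by
              rw [key z, mod_sub_eq (dd_lt α z) (by omega)]
              rw [if_neg (by omega)]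
              omega
            omega
          · have hz : (p.symm z).val = k + 1 := by omega
            have hzx : z = vtx hn p (k+1) := by rw [← hz, vtx_symm]
            rw [hzx]
            have : dd n (vtx hn p (k+1)) (vtx hn p (k+1)) = 0 := dd_eq_zero.mpr rfl
            omega
        · intro h
          by_cases hz : z = vtx hn p (k+1)
          · rw [hz, hsx]
          · have h2 : dd n α z ≠ n - 1 := fun hh => hz (dd_inj (hh.trans hcase.symm))
            have hlt2 : dd n α z < n - 1 := by have := dd_lt α z; omega
            have h3 : dd n (vtx hn p (k+1)) z = dd n α z + 1 := by
              rw [key z, mod_sub_eq (dd_lt α z) (by omega)]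
              rw [if_neg (by omega)]
              omega
            have := (hα z).mpr (by omega)
            omega
      · -- impossible middle case: find a crossing
        exfalso
        have hd1 : dd n α ⟨(α.val + (k+1)) % n, Nat.mod_lt _ hn⟩ = k + 1 :=
          dd_ofAdd hn α (k+1) (by omega)
        have hd2 : dd n α ⟨(α.val + (n-1)) % n, Nat.mod_lt _ hn⟩ = n - 1 :=
          dd_ofAdd hn α (n-1) (by omega)
        set z1 : Fin n := ⟨(α.val + (k+1)) % n, Nat.mod_lt _ hn⟩ with hz1
        set z2 : Fin n := ⟨(α.val + (n-1)) % n, Nat.mod_lt _ hn⟩ with hz2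
        have ht1n : (p.symm z1).val < n := (p.symm z1).isLt
        have ht2n : (p.symm z2).val < n := (p.symm z2).isLt
        have hv1 : vtx hn p (p.symm z1).val = z1 := vtx_symm hn p z1
        have hv2 : vtx hn p (p.symm z2).val = z2 := vtx_symm hn p z2
        have ht1k : k + 2 ≤ (p.symm z1).val := by
          rcases Nat.lt_or_ge (p.symm z1).val (k+1) with h | h
          · have := (hα z1).mp (by omega); omega
          · rcases eq_or_lt_of_le h with h' | h'
            · exfalso
              have : z1 = vtx hn p (k+1) := by rw [← hv1, ← h']
              rw [this] at hd1
              omega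
            · omega
        have ht2k : k + 2 ≤ (p.symm z2).val := by
          rcases Nat.lt_or_ge (p.symm z2).val (k+1) with h | h
          · have := (hα z2).mp (by omega); omega
          · rcases eq_or_lt_of_le h with h' | h'
            · exfalso
              have : z2 = vtx hn p (k+1) := by rw [← hv2, ← h']
              rw [this] at hd2
              omega
            · omega
        have hm0k : dd n α (vtx hn p k) ≤ k := (hα _).mp (le_of_eq (symm_vtx hn p (by omega)))
        have hm0n : dd n α (vtx hn p k) < n := dd_lt _ _
        -- side values
        have hda : dd n (vtx hn p k) z1 = k + 1 - dd n α (vtx hn p k) := by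
          rw [dd_rebase α, hd1, mod_sub_eq (by omega) hm0n, if_pos (by omega)]
        have hdb : dd n (vtx hn p k) (vtx hn p (k+1)) =
            dd n α (vtx hn p (k+1)) - dd n α (vtx hn p k) := by
          rw [dd_rebase α, mod_sub_eq hdx_lt hm0n, if_pos (by omega)]
        have hdc : dd n (vtx hn p k) z2 = n - 1 - dd n α (vtx hn p k) := by
          rw [dd_rebase α, hd2, mod_sub_eq (by omega) hm0n, if_pos (by omega)]
        set f : ℕ → Bool := fun t =>
          decide (dd n (vtx hn p k) (vtx hn p t) < dd n (vtx hn p k) (vtx hn p (k+1)))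
          with hfdef
        have hf1 : f (p.symm z1).val = true := by
          simp only [hfdef, hv1, hda, hdb, decide_eq_true_eq]
          omega
        have hf2 : f (p.symm z2).val = false := by
          simp only [hfdef, hv2, hdc, hdb, decide_eq_false_iff_not, not_lt]
          omega
        have hfne : f (p.symm z1).val ≠ f (p.symm z2).val := by rw [hf1, hf2]; simp
        have hflip : ∃ t, k + 2 ≤ t ∧ t + 1 < n ∧ f t ≠ f (t+1) := by
          rcases le_total (p.symm z1).val (p.symm z2).val with h | h
          · obtain ⟨t, h1, h2, h3⟩ := flip_exists f h hfne
            exact ⟨t, by omega, by omega, h3⟩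
          · obtain ⟨t, h1, h2, h3⟩ := flip_exists f h hfne.symm
            exact ⟨t, by omega, by omega, h3⟩
        obtain ⟨t, htk, htn, hft⟩ := hflip
        have hE1 : s(vtx hn p k, vtx hn p (k+1)) ∈ pathEdges p :=
          (mem_pathEdges_s3 hn p _).mpr ⟨k, by omega, rfl⟩
        have hE2 : s(vtx hn p t, vtx hn p (t+1)) ∈ pathEdges p :=
          (mem_pathEdges_s3 hn p _).mpr ⟨t, by omega, rfl⟩
        refine hNC _ hE1 _ hE2 (crosses_of ?_ ?_ ?_ ?_ ?_ ?_ ?_)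
        · rw [ne_eq, vtx_inj hn p (by omega) (by omega)]; omega
        · rw [ne_eq, vtx_inj hn p (by omega) (by omega)]; omega
        · rw [ne_eq, vtx_inj hn p (by omega) (by omega)]; omega
        · rw [ne_eq, vtx_inj hn p (by omega) (by omega)]; omega
        · rw [ne_eq, vtx_inj hn p (by omega) (by omega)]; omega
        · rw [ne_eq, vtx_inj hn p (by omega) (by omega)]; omega
        · unfold Xp
          simp only [hfdef, ne_eq, decide_eq_decide] at hft
          tauto

lemma extra_edge_struct (hn : 0 < n) (p : Equiv.Perm (Fin n)) {i : ℕ} (hi : i + 1 < n)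
    {E : Finset (Sym2 (Fin n))}
    (hE : ∀ g, g ∈ E ↔ ∃ k, k + 1 < n ∧ k ≠ i ∧ g = s(vtx hn p k, vtx hn p (k+1)))
    {f : Sym2 (Fin n)} (hf : f ∉ E) (q : Equiv.Perm (Fin n))
    (hq : pathEdges q = insert f E) :
    ∃ a b : ℕ, (a = 0 ∨ a = i) ∧ (b = i + 1 ∨ b = n - 1) ∧
      f = s(vtx hn p a, vtx hn p b) := by
  have hfq : f ∈ pathEdges q := hq ▸ Finset.mem_insert_self f E
  obtain ⟨j, hj, hfeq⟩ := (mem_pathEdges_s3 hn q f).mp hfq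
  -- every endpoint of f has p-index among 0, i, i+1, n-1
  have hidx : ∀ z, z ∈ f → (p.symm z).val = 0 ∨ (p.symm z).val = i ∨
      (p.symm z).val = i + 1 ∨ (p.symm z).val = n - 1 := by
    intro z hzf
    by_contra hco
    push_neg at hco
    obtain ⟨h0, hiA, hi1, hn1⟩ := hco
    have hmn : (p.symm z).val < n := (p.symm z).isLt
    have hz : vtx hn p (p.symm z).val = z := vtx_symm hn p z
    have hh1 : s(vtx hn p ((p.symm z).val - 1), vtx hn p (p.symm z).val) ∈ E := by
      rw [hE]
      refine ⟨(p.symm z).val - 1, by omega, by omega, ?_⟩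
      rw [show (p.symm z).val - 1 + 1 = (p.symm z).val by omega]
    have hh2 : s(vtx hn p (p.symm z).val, vtx hn p ((p.symm z).val + 1)) ∈ E :=
      (hE _).mpr ⟨(p.symm z).val, by omega, by omega, rfl⟩
    have hq1 : s(vtx hn p ((p.symm z).val - 1), vtx hn p (p.symm z).val) ∈ pathEdges q := by
      rw [hq]; exact Finset.mem_insert_of_mem hh1
    have hq2 : s(vtx hn p (p.symm z).val, vtx hn p ((p.symm z).val + 1)) ∈ pathEdges q := by
      rw [hq]; exact Finset.mem_insert_of_mem hh2
    have hz1 : z ∈ s(vtx hn p ((p.symm z).val - 1), vtx hn p (p.symm z).val) := by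
      rw [hz]; exact Sym2.mem_mk_right _ _
    have hz2 : z ∈ s(vtx hn p (p.symm z).val, vtx hn p ((p.symm z).val + 1)) := by
      rw [hz]; exact Sym2.mem_mk_left _ _
    obtain ⟨a1, ha1n, he1, hd1⟩ := edges_at hn q z _ hq1 hz1
    obtain ⟨a2, ha2n, he2, hd2⟩ := edges_at hn q z _ hq2 hz2
    obtain ⟨a3, ha3n, he3, hd3⟩ := edges_at hn q z _ hfq hzf
    have d12 : s(vtx hn p ((p.symm z).val - 1), vtx hn p (p.symm z).val) ≠
        s(vtx hn p (p.symm z).val, vtx hn p ((p.symm z).val + 1)) := by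
      intro hh
      rw [Sym2.eq_iff] at hh
      rcases hh with ⟨h1, h2⟩ | ⟨h1, h2⟩
      · have := (vtx_inj hn p (by omega) (by omega)).mp h1; omega
      · have := (vtx_inj hn p (by omega) (by omega)).mp h1; omega
    have d13 : f ≠ s(vtx hn p ((p.symm z).val - 1), vtx hn p (p.symm z).val) :=
      fun hh => hf (hh ▸ hh1)
    have d23 : f ≠ s(vtx hn p (p.symm z).val, vtx hn p ((p.symm z).val + 1)) :=
      fun hh => hf (hh ▸ hh2)
    have ha12 : a1 ≠ a2 := by
      intro hh; exact d12 (by rw [he1, hh, ← he2])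
    have ha13 : a3 ≠ a1 := by
      intro hh; exact d13 (by rw [he3, hh, ← he1])
    have ha23 : a3 ≠ a2 := by
      intro hh; exact d23 (by rw [he3, hh, ← he2])
    omega
  -- f cannot have both endpoints on the same side of the split
  have main : ∀ zz ww : Fin n, f = s(zz, ww) →
      ((p.symm zz).val ≤ i ↔ (p.symm ww).val ≤ i) → False := by
    intro zz ww hfzw hsame
    have hpres : ∀ t, t + 1 < n →
        (decide ((p.symm (vtx hn q t)).val ≤ i) =
          decide ((p.symm (vtx hn q (t+1))).val ≤ i)) := by
      intro t htn
      have hmem : s(vtx hn q t, vtx hn q (t+1)) ∈ pathEdges q :=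
        (mem_pathEdges_s3 hn q _).mpr ⟨t, htn, rfl⟩
      rw [hq, Finset.mem_insert] at hmem
      rcases hmem with hmem | hmem
      · rw [hfzw] at hmem
        rw [Sym2.eq_iff] at hmem
        rcases hmem with ⟨h1, h2⟩ | ⟨h1, h2⟩ <;>
          · rw [h1, h2]
            simp only [decide_eq_decide]
            tauto
      · rw [hE] at hmem
        obtain ⟨k, hk, hki, hkeq⟩ := hmem
        rw [Sym2.eq_iff] at hkeq
        rcases hkeq with ⟨h1, h2⟩ | ⟨h1, h2⟩ <;>
          · rw [h1, h2, symm_vtx hn p (by omega), symm_vtx hn p (by omega)]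
            simp only [decide_eq_decide]
            omega
    have hj0 : decide ((p.symm (vtx hn q (q.symm (vtx hn p 0)).val)).val ≤ i) = true := by
      rw [vtx_symm hn q, symm_vtx hn p (by omega)]
      simp
    have hj1 : decide ((p.symm (vtx hn q (q.symm (vtx hn p (n-1))).val)).val ≤ i) = false := by
      rw [vtx_symm hn q, symm_vtx hn p (by omega)]
      simp only [decide_eq_false_iff_not, not_le]
      omega
    have hgne : decide ((p.symm (vtx hn q (q.symm (vtx hn p 0)).val)).val ≤ i) ≠
        decide ((p.symm (vtx hn q (q.symm (vtx hn p (n-1))).val)).val ≤ i) := by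
      rw [hj0, hj1]; simp
    have hb0 : (q.symm (vtx hn p 0)).val < n := (q.symm _).isLt
    have hb1 : (q.symm (vtx hn p (n-1))).val < n := (q.symm _).isLt
    have hflip : ∃ t, t + 1 < n ∧
        decide ((p.symm (vtx hn q t)).val ≤ i) ≠ decide ((p.symm (vtx hn q (t+1))).val ≤ i) := by
      rcases le_total (q.symm (vtx hn p 0)).val (q.symm (vtx hn p (n-1))).val with h | h
      · obtain ⟨t, _, h2, h3⟩ :=
          flip_exists (fun t => decide ((p.symm (vtx hn q t)).val ≤ i)) h hgne
        exact ⟨t, by omega, h3⟩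
      · obtain ⟨t, _, h2, h3⟩ :=
          flip_exists (fun t => decide ((p.symm (vtx hn q t)).val ≤ i)) h hgne.symm
        exact ⟨t, by omega, h3⟩
    obtain ⟨t, htn, hgt⟩ := hflip
    exact hgt (hpres t htn)
  -- conclude
  have hz1f : vtx hn q j ∈ f := by rw [hfeq]; exact Sym2.mem_mk_left _ _
  have hz2f : vtx hn q (j+1) ∈ f := by rw [hfeq]; exact Sym2.mem_mk_right _ _
  have hdiff : ¬ ((p.symm (vtx hn q j)).val ≤ i ↔ (p.symm (vtx hn q (j+1))).val ≤ i) :=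
    main _ _ hfeq
  have hida := hidx _ hz1f
  have hidb := hidx _ hz2f
  by_cases h1 : (p.symm (vtx hn q j)).val ≤ i
  · have h2 : ¬ (p.symm (vtx hn q (j+1))).val ≤ i := by tauto
    refine ⟨(p.symm (vtx hn q j)).val, (p.symm (vtx hn q (j+1))).val, by omega, by omega, ?_⟩
    rw [vtx_symm hn p, vtx_symm hn p]
    exact hfeq
  · have h2 : (p.symm (vtx hn q (j+1))).val ≤ i := by tauto
    refine ⟨(p.symm (vtx hn q (j+1))).val, (p.symm (vtx hn q j)).val, by omega, by omega, ?_⟩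
    rw [vtx_symm hn p, vtx_symm hn p]
    rw [hfeq]
    exact Sym2.eq_swap

/-- straddle: `x` lies strictly between `s` and `t` in offset order from `α`. -/
def Str (n : ℕ) (α x s t : Fin n) : Prop :=
  (dd n α s < dd n α x ∧ dd n α x < dd n α t) ∨
  (dd n α t < dd n α x ∧ dd n α x < dd n α s)

lemma decoupA {α x y s t : Fin n} {i : ℕ} (hx : dd n α x ≤ i) (hy : i + 1 ≤ dd n α y)
    (hs : dd n α s ≤ i) (ht : dd n α t ≤ i) (hxs : dd n α x ≠ dd n α s)
    (hxt : dd n α x ≠ dd n α t) :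
    Xp n x y s t ↔ Str n α x s t := by
  have h1 : dd n x s = (dd n α s + n - dd n α x) % n := dd_rebase α x s
  have h2 : dd n x y = (dd n α y + n - dd n α x) % n := dd_rebase α x y
  have h3 : dd n x t = (dd n α t + n - dd n α x) % n := dd_rebase α x t
  rw [mod_sub_eq (dd_lt α s) (dd_lt α x)] at h1
  rw [mod_sub_eq (dd_lt α y) (dd_lt α x)] at h2
  rw [mod_sub_eq (dd_lt α t) (dd_lt α x)] at h3
  have hyn := dd_lt α y
  unfold Xp Str
  rw [h1, h2, h3]
  split_ifs <;> omega

lemma decoupB {α x y s t : Fin n} {i : ℕ} (hx : dd n α x ≤ i) (hy : i + 1 ≤ dd n α y)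
    (hs : i + 1 ≤ dd n α s) (ht : i + 1 ≤ dd n α t) (hys : dd n α y ≠ dd n α s)
    (hyt : dd n α y ≠ dd n α t) :
    Xp n y x s t ↔ Str n α y s t := by
  have h1 : dd n y s = (dd n α s + n - dd n α y) % n := dd_rebase α y s
  have h2 : dd n y x = (dd n α x + n - dd n α y) % n := dd_rebase α y x
  have h3 : dd n y t = (dd n α t + n - dd n α y) % n := dd_rebase α y t
  rw [mod_sub_eq (dd_lt α s) (dd_lt α y)] at h1
  rw [mod_sub_eq (dd_lt α x) (dd_lt α y)] at h2
  rw [mod_sub_eq (dd_lt α t) (dd_lt α y)] at h3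
  have hyn := dd_lt α y
  have hsn := dd_lt α s
  have htn := dd_lt α t
  unfold Xp Str
  rw [h1, h2, h3]
  split_ifs <;> omega

-- reversal permutations
def revAfun (n i : ℕ) (hi : i < n) : Fin n → Fin n :=
  fun k => if k.val ≤ i then ⟨i - k.val, by omega⟩ else k

lemma revAfun_inv (hi : i < n) : Function.Involutive (revAfun n i hi) := by
  intro k
  unfold revAfun
  by_cases h : k.val ≤ i
  · rw [if_pos h]
    simp only
    rw [if_pos (by omega)]
    exact Fin.ext (by simp; omega)
  · rw [if_neg h, if_neg h]

def revA (hn : 0 < n) (i : ℕ) (hi : i < n) : Equiv.Perm (Fin n) :=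
  Function.Involutive.toPerm _ (revAfun_inv hi)

lemma revA_val (hn : 0 < n) {i : ℕ} (hi : i < n) {k : ℕ} (hk : k < n) :
    ((revA hn i hi) ⟨k, hk⟩).val = if k ≤ i then i - k else k := by
  show ((revAfun n i hi) ⟨k, hk⟩).val = _
  unfold revAfun
  split_ifs <;> rfl

def revBfun (n i : ℕ) (hi : i < n) : Fin n → Fin n :=
  fun k => if h : i + 1 ≤ k.val then ⟨n + i - k.val, by omega⟩ else k

lemma revBfun_inv (hi : i < n) : Function.Involutive (revBfun n i hi) := by
  intro k
  have := k.isLt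
  unfold revBfun
  by_cases h : i + 1 ≤ k.val
  · rw [dif_pos h]
    simp only
    rw [dif_pos (show i + 1 ≤ n + i - k.val from by omega)]
    exact Fin.ext (by simp; omega)
  · rw [dif_neg h, dif_neg h]

def revB (hn : 0 < n) (i : ℕ) (hi : i < n) : Equiv.Perm (Fin n) :=
  Function.Involutive.toPerm _ (revBfun_inv hi)

lemma revB_val (hn : 0 < n) {i : ℕ} (hi : i < n) {k : ℕ} (hk : k < n) :
    ((revB hn i hi) ⟨k, hk⟩).val = if i + 1 ≤ k then n + i - k else k := by
  show ((revBfun n i hi) ⟨k, hk⟩).val = _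
  unfold revBfun
  split_ifs <;> rfl

def revCfun (n i : ℕ) (hi : i < n) : Fin n → Fin n :=
  fun k => if h : k.val ≤ i then ⟨i - k.val, by omega⟩ else ⟨n + i - k.val, by omega⟩

lemma revCfun_inv (hi : i < n) : Function.Involutive (revCfun n i hi) := by
  intro k
  have := k.isLt
  unfold revCfun
  by_cases h : k.val ≤ i
  · rw [dif_pos h]
    simp only
    rw [dif_pos (show i - k.val ≤ i from by omega)]
    exact Fin.ext (by simp; omega)
  · rw [dif_neg h]
    simp only
    rw [dif_neg (show ¬ (n + i - k.val ≤ i) from by omega)]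
    exact Fin.ext (by simp; omega)

def revC (hn : 0 < n) (i : ℕ) (hi : i < n) : Equiv.Perm (Fin n) :=
  Function.Involutive.toPerm _ (revCfun_inv hi)

lemma revC_val (hn : 0 < n) {i : ℕ} (hi : i < n) {k : ℕ} (hk : k < n) :
    ((revC hn i hi) ⟨k, hk⟩).val = if k ≤ i then i - k else n + i - k := by
  show ((revCfun n i hi) ⟨k, hk⟩).val = _
  unfold revCfun
  split_ifs <;> rfl

lemma vtx_trans_val (hn : 0 < n) (σ p : Equiv.Perm (Fin n)) {k : ℕ} (h : k < n) :
    vtx hn (σ.trans p) k = vtx hn p (σ ⟨k, h⟩).val := by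
  rw [vtx_eq hn _ h, vtx_eq hn p (σ ⟨k, h⟩).isLt]
  simp [Equiv.trans]

lemma edge_repr (hn : 0 < n) (p : Equiv.Perm (Fin n)) {a b k : ℕ}
    (h1 : a = k ∧ b = k + 1 ∨ a = k + 1 ∧ b = k) :
    s(vtx hn p a, vtx hn p b) = s(vtx hn p k, vtx hn p (k+1)) := by
  rcases h1 with ⟨rfl, rfl⟩ | ⟨rfl, rfl⟩
  · rfl
  · exact Sym2.eq_swap

lemma pathEdges_revA (hn : 0 < n) (p : Equiv.Perm (Fin n)) {i : ℕ} (hi : i + 1 < n)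
    (e : Sym2 (Fin n)) :
    e ∈ pathEdges ((revA hn i (by omega)).trans p) ↔
      (e = s(vtx hn p 0, vtx hn p (i+1)) ∨
        ∃ k, k + 1 < n ∧ k ≠ i ∧ e = s(vtx hn p k, vtx hn p (k+1))) := by
  rw [mem_pathEdges_s3 hn _ e]
  constructor
  · rintro ⟨k, hk, rfl⟩
    rw [vtx_trans_val hn _ p (show k < n by omega), vtx_trans_val hn _ p hk,
      revA_val hn (by omega), revA_val hn (by omega)]
    rcases Nat.lt_or_ge k i with h | h
    · right
      refine ⟨i - k - 1, by omega, by omega, ?_⟩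
      rw [if_pos (by omega), if_pos (by omega)]
      exact edge_repr hn p (Or.inr ⟨by omega, by omega⟩)
    · rcases eq_or_lt_of_le h with h' | h'
      · left
        rw [if_pos (by omega), if_neg (by omega)]
        rw [show i - k = 0 by omega, show k + 1 = i + 1 by omega]
      · right
        exact ⟨k, hk, by omega, by rw [if_neg (by omega), if_neg (by omega)]⟩
  · rintro (rfl | ⟨k, hk, hki, rfl⟩)
    · refine ⟨i, by omega, ?_⟩
      rw [vtx_trans_val hn _ p (show i < n by omega), vtx_trans_val hn _ p (show i + 1 < n by omega),
        revA_val hn (by omega), revA_val hn (by omega), if_pos le_rfl, if_neg (by omega),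
        Nat.sub_self]
    · rcases Nat.lt_or_ge k i with h | h
      · refine ⟨i - k - 1, by omega, ?_⟩
        rw [vtx_trans_val hn _ p (show i - k - 1 < n by omega),
          vtx_trans_val hn _ p (show i - k - 1 + 1 < n by omega),
          revA_val hn (by omega), revA_val hn (by omega), if_pos (by omega), if_pos (by omega)]
        rw [show i - (i - k - 1) = k + 1 by omega, show i - (i - k - 1 + 1) = k by omega]
        exact Sym2.eq_swap
      · refine ⟨k, hk, ?_⟩
        rw [vtx_trans_val hn _ p (show k < n by omega), vtx_trans_val hn _ p hk,
          revA_val hn (by omega), revA_val hn (by omega), if_neg (by omega), if_neg (by omega)]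

lemma pathEdges_revB (hn : 0 < n) (p : Equiv.Perm (Fin n)) {i : ℕ} (hi : i + 1 < n)
    (e : Sym2 (Fin n)) :
    e ∈ pathEdges ((revB hn i (by omega)).trans p) ↔
      (e = s(vtx hn p i, vtx hn p (n-1)) ∨
        ∃ k, k + 1 < n ∧ k ≠ i ∧ e = s(vtx hn p k, vtx hn p (k+1))) := by
  rw [mem_pathEdges_s3 hn _ e]
  constructor
  · rintro ⟨k, hk, rfl⟩
    rw [vtx_trans_val hn _ p (show k < n by omega), vtx_trans_val hn _ p hk,
      revB_val hn (by omega), revB_val hn (by omega)]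
    rcases Nat.lt_or_ge k i with h | h
    · right
      exact ⟨k, hk, by omega, by rw [if_neg (by omega), if_neg (by omega)]⟩
    · rcases eq_or_lt_of_le h with h' | h'
      · left
        rw [if_neg (by omega), if_pos (by omega)]
        rw [show n + i - (k + 1) = n - 1 by omega, show k = i by omega]
      · right
        refine ⟨n + i - k - 1, by omega, by omega, ?_⟩
        rw [if_pos (by omega), if_pos (by omega)]
        exact edge_repr hn p (Or.inr ⟨by omega, by omega⟩)
  · rintro (rfl | ⟨k, hk, hki, rfl⟩)
    · refine ⟨i, by omega, ?_⟩
      rw [vtx_trans_val hn _ p (show i < n by omega), vtx_trans_val hn _ p (show i + 1 < n by omega),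
        revB_val hn (by omega), revB_val hn (by omega), if_neg (by omega), if_pos (by omega)]
      rw [show n + i - (i + 1) = n - 1 by omega]
    · rcases Nat.lt_or_ge k i with h | h
      · refine ⟨k, hk, ?_⟩
        rw [vtx_trans_val hn _ p (show k < n by omega), vtx_trans_val hn _ p hk,
          revB_val hn (by omega), revB_val hn (by omega), if_neg (by omega), if_neg (by omega)]
      · refine ⟨n + i - k - 1, by omega, ?_⟩
        rw [vtx_trans_val hn _ p (show n + i - k - 1 < n by omega),
          vtx_trans_val hn _ p (show n + i - k - 1 + 1 < n by omega),
          revB_val hn (by omega), revB_val hn (by omega), if_pos (by omega), if_pos (by omega)]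
        rw [show n + i - (n + i - k - 1) = k + 1 by omega,
          show n + i - (n + i - k - 1 + 1) = k by omega]
        exact Sym2.eq_swap

lemma pathEdges_revC (hn : 0 < n) (p : Equiv.Perm (Fin n)) {i : ℕ} (hi : i + 1 < n)
    (e : Sym2 (Fin n)) :
    e ∈ pathEdges ((revC hn i (by omega)).trans p) ↔
      (e = s(vtx hn p 0, vtx hn p (n-1)) ∨
        ∃ k, k + 1 < n ∧ k ≠ i ∧ e = s(vtx hn p k, vtx hn p (k+1))) := by
  rw [mem_pathEdges_s3 hn _ e]
  constructor
  · rintro ⟨k, hk, rfl⟩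
    rw [vtx_trans_val hn _ p (show k < n by omega), vtx_trans_val hn _ p hk,
      revC_val hn (by omega), revC_val hn (by omega)]
    rcases Nat.lt_or_ge k i with h | h
    · right
      refine ⟨i - k - 1, by omega, by omega, ?_⟩
      rw [if_pos (by omega), if_pos (by omega)]
      exact edge_repr hn p (Or.inr ⟨by omega, by omega⟩)
    · rcases eq_or_lt_of_le h with h' | h'
      · left
        rw [if_pos (by omega), if_neg (by omega)]
        rw [show i - k = 0 by omega, show n + i - (k + 1) = n - 1 by omega]
      · right
        refine ⟨n + i - k - 1, by omega, by omega, ?_⟩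
        rw [if_neg (by omega), if_neg (by omega)]
        exact edge_repr hn p (Or.inr ⟨by omega, by omega⟩)
  · rintro (rfl | ⟨k, hk, hki, rfl⟩)
    · refine ⟨i, by omega, ?_⟩
      rw [vtx_trans_val hn _ p (show i < n by omega), vtx_trans_val hn _ p (show i + 1 < n by omega),
        revC_val hn (by omega), revC_val hn (by omega), if_pos le_rfl, if_neg (by omega),
        Nat.sub_self]
      rw [show n + i - (i + 1) = n - 1 by omega]
    · rcases Nat.lt_or_ge k i with h | h
      · refine ⟨i - k - 1, by omega, ?_⟩
        rw [vtx_trans_val hn _ p (show i - k - 1 < n by omega),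
          vtx_trans_val hn _ p (show i - k - 1 + 1 < n by omega),
          revC_val hn (by omega), revC_val hn (by omega), if_pos (by omega), if_pos (by omega)]
        rw [show i - (i - k - 1) = k + 1 by omega, show i - (i - k - 1 + 1) = k by omega]
        exact Sym2.eq_swap
      · refine ⟨n + i - k - 1, by omega, ?_⟩
        rw [vtx_trans_val hn _ p (show n + i - k - 1 < n by omega),
          vtx_trans_val hn _ p (show n + i - k - 1 + 1 < n by omega),
          revC_val hn (by omega), revC_val hn (by omega), if_neg (by omega), if_neg (by omega)]
        rw [show n + i - (n + i - k - 1) = k + 1 by omega,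
          show n + i - (n + i - k - 1 + 1) = k by omega]
        exact Sym2.eq_swap

end Support
set_option maxHeartbeats 2000000 in
/-- For `n ≥ 5` points in convex position, every intersection max-clique of `G(P)`
has size 2 or 4. -/
theorem interClique_card (n : ℕ) (hn : 5 ≤ n) (u v : PVert n)
    (huv : (pathGraph n).Adj u v) :
    (interClique u v).ncard = 2 ∨ (interClique u v).ncard = 4 := by
  classical
  have hn0 : 0 < n := by omega
  obtain ⟨hne, hcard2⟩ := huv
  obtain ⟨⟨p, hup⟩, hNCu⟩ := u.2
  have hNCp : ∀ e ∈ pathEdges p, ∀ f ∈ pathEdges p, ¬ Crosses e f := by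
    rw [← hup]; exact hNCu
  have hcu : u.1.card = n - 1 := by rw [hup]; exact card_pathEdges hn0 p
  obtain ⟨q0, hvq0⟩ := v.2.1
  have hcv : v.1.card = n - 1 := by rw [hvq0]; exact card_pathEdges hn0 q0
  have hdisj : Disjoint (u.1 \ v.1) (v.1 \ u.1) := disjoint_sdiff_sdiff
  have hsum : (u.1 \ v.1).card + (v.1 \ u.1).card = 2 := by
    rw [← Finset.card_union_of_disjoint hdisj]; exact hcard2
  have hq1 := Finset.card_sdiff_add_card_inter u.1 v.1
  have hq2 := Finset.card_sdiff_add_card_inter v.1 u.1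
  rw [Finset.inter_comm] at hq2
  have hone : (u.1 \ v.1).card = 1 := by omega
  have hone' : (v.1 \ u.1).card = 1 := by omega
  obtain ⟨e_u, he_u⟩ := Finset.card_eq_one.mp hone
  obtain ⟨e_v, he_v⟩ := Finset.card_eq_one.mp hone'
  set E := u.1 ∩ v.1 with hEdef
  have heu_mem : e_u ∈ u.1 ∧ e_u ∉ v.1 :=
    Finset.mem_sdiff.mp (he_u ▸ Finset.mem_singleton_self e_u)
  have hev_mem : e_v ∈ v.1 ∧ e_v ∉ u.1 :=
    Finset.mem_sdiff.mp (he_v ▸ Finset.mem_singleton_self e_v)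
  have heuE : e_u ∉ E := fun h => heu_mem.2 (Finset.mem_inter.mp h).2
  have hevE : e_v ∉ E := fun h => hev_mem.2 (Finset.mem_inter.mp h).1
  have huE : u.1 = insert e_u E := by
    ext g
    simp only [Finset.mem_insert, hEdef, Finset.mem_inter]
    constructor
    · intro hg
      by_cases h : g ∈ v.1
      · exact Or.inr ⟨hg, h⟩
      · have : g ∈ u.1 \ v.1 := Finset.mem_sdiff.mpr ⟨hg, h⟩
        rw [he_u] at this
        exact Or.inl (Finset.mem_singleton.mp this)
    · rintro (rfl | ⟨h, _⟩)
      · exact heu_mem.1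
      · exact h
  have hvE : v.1 = insert e_v E := by
    ext g
    simp only [Finset.mem_insert, hEdef, Finset.mem_inter]
    constructor
    · intro hg
      by_cases h : g ∈ u.1
      · exact Or.inr ⟨h, hg⟩
      · have : g ∈ v.1 \ u.1 := Finset.mem_sdiff.mpr ⟨hg, h⟩
        rw [he_v] at this
        exact Or.inl (Finset.mem_singleton.mp this)
    · rintro (rfl | ⟨_, h⟩)
      · exact hev_mem.1
      · exact h
  have heup : e_u ∈ pathEdges p := hup ▸ heu_mem.1
  obtain ⟨i, hi, heui⟩ := (mem_pathEdges_s3 hn0 p _).mp heup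
  have hE : ∀ g, g ∈ E ↔
      ∃ k, k + 1 < n ∧ k ≠ i ∧ g = s(vtx hn0 p k, vtx hn0 p (k+1)) := by
    intro g
    constructor
    · intro hg
      have hgu : g ∈ u.1 := (Finset.mem_inter.mp hg).1
      obtain ⟨k, hk, rfl⟩ := (mem_pathEdges_s3 hn0 p _).mp (hup ▸ hgu)
      refine ⟨k, hk, ?_, rfl⟩
      rintro rfl
      exact heuE (by rw [heui]; exact hg)
    · rintro ⟨k, hk, hki, rfl⟩
      have hgu : s(vtx hn0 p k, vtx hn0 p (k+1)) ∈ u.1 :=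
        hup ▸ (mem_pathEdges_s3 hn0 p _).mpr ⟨k, hk, rfl⟩
      have hgne : s(vtx hn0 p k, vtx hn0 p (k+1)) ≠ e_u := by
        rw [heui]
        intro hh
        exact hki (edge_inj hn0 p hk hi hh)
      have hgv : s(vtx hn0 p k, vtx hn0 p (k+1)) ∈ v.1 := by
        by_contra h
        have : s(vtx hn0 p k, vtx hn0 p (k+1)) ∈ u.1 \ v.1 := Finset.mem_sdiff.mpr ⟨hgu, h⟩
        rw [he_u] at this
        exact hgne (Finset.mem_singleton.mp this)
      exact Finset.mem_inter.mpr ⟨hgu, hgv⟩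
  have huC : u ∈ interClique u v := ⟨e_u, heuE, huE⟩
  have hvC : v ∈ interClique u v := ⟨e_v, hevE, hvE⟩
  have hstruct : ∀ w : PVert n, w ∈ interClique u v → ∃ e, e ∉ E ∧ w.1 = insert e E ∧
      ∃ a b : ℕ, (a = 0 ∨ a = i) ∧ (b = i + 1 ∨ b = n - 1) ∧
        e = s(vtx hn0 p a, vtx hn0 p b) := by
    rintro w ⟨e, heE, hw⟩
    obtain ⟨qw, hqw⟩ := w.2.1
    have hpe : pathEdges qw = insert e E := by rw [← hqw, hw]
    obtain ⟨a, b, ha, hb, heab⟩ := extra_edge_struct hn0 p hi hE heE qw hpe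
    exact ⟨e, heE, hw, a, b, ha, hb, heab⟩
  by_cases hdeg : i = 0 ∨ i + 2 = n
  · -- degenerate case : one side of the removed edge is a single vertex
    have key : ∃ c1 c2 : Sym2 (Fin n), c1 ≠ c2 ∧
        ∀ w ∈ interClique u v, ∃ e, e ∉ E ∧ w.1 = insert e E ∧ (e = c1 ∨ e = c2) := by
      rcases hdeg with rfl | hdeg
      · refine ⟨s(vtx hn0 p 0, vtx hn0 p 1), s(vtx hn0 p 0, vtx hn0 p (n-1)), ?_, ?_⟩
        · intro hh
          rw [Sym2.eq_iff] at hh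
          rcases hh with ⟨h1, h2⟩ | ⟨h1, h2⟩
          · have := (vtx_inj hn0 p (by omega) (by omega)).mp h2; omega
          · have := (vtx_inj hn0 p (by omega) (by omega)).mp h1; omega
        · intro w hw
          obtain ⟨e, h1, h2, a, b, ha, hb, he⟩ := hstruct w hw
          refine ⟨e, h1, h2, ?_⟩
          have ha0 : a = 0 := by omega
          subst ha0
          rcases hb with rfl | rfl
          · left; exact he
          · right; exact he
      · refine ⟨s(vtx hn0 p 0, vtx hn0 p (n-1)), s(vtx hn0 p i, vtx hn0 p (n-1)), ?_, ?_⟩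
        · intro hh
          rw [Sym2.eq_iff] at hh
          rcases hh with ⟨h1, h2⟩ | ⟨h1, h2⟩
          · have := (vtx_inj hn0 p (by omega) (by omega)).mp h1; omega
          · have := (vtx_inj hn0 p (by omega) (by omega)).mp h1; omega
        · intro w hw
          obtain ⟨e, h1, h2, a, b, ha, hb, he⟩ := hstruct w hw
          refine ⟨e, h1, h2, ?_⟩
          have hb' : b = n - 1 := by omega
          subst hb'
          rcases ha with rfl | rfl
          · left; exact he
          · right; exact he
    obtain ⟨c1, c2, hc12, hopt⟩ := key
    obtain ⟨eu', hu'1, hu'2, hu'3⟩ := hopt u huC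
    obtain ⟨ev', hv'1, hv'2, hv'3⟩ := hopt v hvC
    have hne' : eu' ≠ ev' := by
      intro hh
      exact hne (Subtype.ext (hu'2.trans (hh ▸ hv'2.symm)))
    have hset : interClique u v = {u, v} := by
      ext w
      simp only [Set.mem_insert_iff, Set.mem_singleton_iff]
      constructor
      · intro hw
        obtain ⟨e, h1, h2, h3⟩ := hopt w hw
        have : e = eu' ∨ e = ev' := by
          rcases h3 with rfl | rfl <;> rcases hu'3 with rfl | rfl <;>
            rcases hv'3 with rfl | rfl <;> tauto
        rcases this with rfl | rfl
        · exact Or.inl (Subtype.ext (h2.trans hu'2.symm))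
        · exact Or.inr (Subtype.ext (h2.trans hv'2.symm))
      · rintro (rfl | rfl)
        · exact huC
        · exact hvC
    rw [hset, Set.ncard_pair hne]
    exact Or.inl rfl
  · -- generic case
    push_neg at hdeg
    have hi1 : 1 ≤ i := by omega
    have hi3 : i + 3 ≤ n := by omega
    obtain ⟨α, hα⟩ := prefix_arc hn0 p hNCp i (by omega)
    have hoff : ∀ m : ℕ, m < n → (dd n α (vtx hn0 p m) ≤ i ↔ m ≤ i) := by
      intro m hm
      have := hα (vtx hn0 p m)
      rw [symm_vtx hn0 p hm] at this
      exact this.symm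
    set FA : Fin n → Prop := fun x => ∀ k, k < i →
      ¬ Str n α x (vtx hn0 p k) (vtx hn0 p (k+1)) with hFA
    set FB : Fin n → Prop := fun y => ∀ k, i + 1 ≤ k → k + 1 < n →
      ¬ Str n α y (vtx hn0 p k) (vtx hn0 p (k+1)) with hFB
    have hvalid : ∀ a b : ℕ, (a = 0 ∨ a = i) → (b = i + 1 ∨ b = n - 1) →
        (IsNCPath (insert s(vtx hn0 p a, vtx hn0 p b) E) ↔
          FA (vtx hn0 p a) ∧ FB (vtx hn0 p b)) := by
      intro a b ha hb
      have han : a < n := by omega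
      have hbn : b < n := by omega
      have hai : a ≤ i := by omega
      have hbi : i + 1 ≤ b := by omega
      have hax : dd n α (vtx hn0 p a) ≤ i := (hoff a han).mpr hai
      have hby : i + 1 ≤ dd n α (vtx hn0 p b) := by
        have := (hoff b hbn)
        omega
      constructor
      · rintro ⟨-, hNC⟩
        have hfmem : s(vtx hn0 p a, vtx hn0 p b) ∈
            insert s(vtx hn0 p a, vtx hn0 p b) E := Finset.mem_insert_self _ _
        constructor
        · intro k hk hStr
          have hxs : vtx hn0 p a ≠ vtx hn0 p k := by
            rintro hh
            rw [← hh] at hStr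
            rcases hStr with ⟨h1, h2⟩ | ⟨h1, h2⟩ <;> omega
          have hxt : vtx hn0 p a ≠ vtx hn0 p (k+1) := by
            rintro hh
            rw [← hh] at hStr
            rcases hStr with ⟨h1, h2⟩ | ⟨h1, h2⟩ <;> omega
          have hg : s(vtx hn0 p k, vtx hn0 p (k+1)) ∈ E :=
            (hE _).mpr ⟨k, by omega, by omega, rfl⟩
          refine hNC _ hfmem _ (Finset.mem_insert_of_mem hg) ?_
          refine crosses_of ?_ ?_ hxs hxt ?_ ?_ ?_
          · rw [ne_eq, vtx_inj hn0 p han hbn]; omega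
          · rw [ne_eq, vtx_inj hn0 p (by omega) (by omega)]; omega
          · rw [ne_eq, vtx_inj hn0 p hbn (by omega)]; omega
          · rw [ne_eq, vtx_inj hn0 p hbn (by omega)]; omega
          · refine (decoupA hax hby ((hoff k (by omega)).mpr (by omega))
              ((hoff (k+1) (by omega)).mpr (by omega)) ?_ ?_).mpr hStr
            · exact dd_ne hxs
            · exact dd_ne hxt
        · intro k hk hkn hStr
          have hys : vtx hn0 p b ≠ vtx hn0 p k := by
            rintro hh
            rw [← hh] at hStr
            rcases hStr with ⟨h1, h2⟩ | ⟨h1, h2⟩ <;> omega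
          have hyt : vtx hn0 p b ≠ vtx hn0 p (k+1) := by
            rintro hh
            rw [← hh] at hStr
            rcases hStr with ⟨h1, h2⟩ | ⟨h1, h2⟩ <;> omega
          have hg : s(vtx hn0 p k, vtx hn0 p (k+1)) ∈ E :=
            (hE _).mpr ⟨k, by omega, by omega, rfl⟩
          refine hNC _ hfmem _ (Finset.mem_insert_of_mem hg) ?_
          have hxy : vtx hn0 p a ≠ vtx hn0 p b := by
            rw [ne_eq, vtx_inj hn0 p han hbn]; omega
          have hsx : vtx hn0 p k ≠ vtx hn0 p a := by
            rw [ne_eq, vtx_inj hn0 p (by omega) han]; omega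
          have htx : vtx hn0 p (k+1) ≠ vtx hn0 p a := by
            rw [ne_eq, vtx_inj hn0 p (by omega) han]; omega
          refine crosses_of hxy ?_ hsx.symm htx.symm hys hyt ?_
          · rw [ne_eq, vtx_inj hn0 p (by omega) (by omega)]; omega
          · refine (Xp_swapL hxy hsx hys.symm htx hyt.symm).mpr ?_
            refine (decoupB hax hby ?_ ?_ (dd_ne hys) (dd_ne hyt)).mpr hStr
            · have := (hoff k (by omega)); omega
            · have := (hoff (k+1) (by omega)); omega
      · rintro ⟨hfa, hfb⟩
        have hcross_fg : ∀ g ∈ E, ¬ Crosses s(vtx hn0 p a, vtx hn0 p b) g := by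
          intro g hg hcr
          obtain ⟨k, hk, hki, rfl⟩ := (hE g).mp hg
          have d1 : vtx hn0 p a ≠ vtx hn0 p k :=
            crosses_ne hcr (Sym2.mem_mk_left _ _) (Sym2.mem_mk_left _ _)
          have d2 : vtx hn0 p a ≠ vtx hn0 p (k+1) :=
            crosses_ne hcr (Sym2.mem_mk_left _ _) (Sym2.mem_mk_right _ _)
          have d3 : vtx hn0 p b ≠ vtx hn0 p k :=
            crosses_ne hcr (Sym2.mem_mk_right _ _) (Sym2.mem_mk_left _ _)
          have d4 : vtx hn0 p b ≠ vtx hn0 p (k+1) :=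
            crosses_ne hcr (Sym2.mem_mk_right _ _) (Sym2.mem_mk_right _ _)
          have hxy : vtx hn0 p a ≠ vtx hn0 p b := by
            rw [ne_eq, vtx_inj hn0 p han hbn]; omega
          have hst : vtx hn0 p k ≠ vtx hn0 p (k+1) := by
            rw [ne_eq, vtx_inj hn0 p (by omega) (by omega)]; omega
          have hX := (crosses_iff hxy hst d1 d2 d3 d4).mp hcr
          rcases Nat.lt_or_ge k i with hlt | hge
          · refine hfa k hlt ?_
            refine (decoupA hax hby ((hoff k (by omega)).mpr (by omega))
              ((hoff (k+1) (by omega)).mpr (by omega)) (dd_ne d1) (dd_ne d2)).mp hX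
          · have hgt : i + 1 ≤ k := by omega
            refine hfb k hgt hk ?_
            have hX2 := (Xp_swapL hxy d1.symm d3.symm d2.symm d4.symm).mp hX
            refine (decoupB hax hby ?_ ?_ (dd_ne d3) (dd_ne d4)).mp hX2
            · have := (hoff k (by omega)); omega
            · have := (hoff (k+1) (by omega)); omega
        constructor
        · -- realizability by an explicit permutation
          have hreal : ∀ c : Sym2 (Fin n),
              (c = s(vtx hn0 p 0, vtx hn0 p (i+1)) ∨ c = s(vtx hn0 p 0, vtx hn0 p (n-1)) ∨
               c = s(vtx hn0 p i, vtx hn0 p (i+1)) ∨ c = s(vtx hn0 p i, vtx hn0 p (n-1))) →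
              ∃ q : Equiv.Perm (Fin n), insert c E = pathEdges q := by
            rintro c (rfl | rfl | rfl | rfl)
            · refine ⟨(revA hn0 i (by omega)).trans p, ?_⟩
              ext g
              rw [Finset.mem_insert, hE g, pathEdges_revA hn0 p hi g]
            · refine ⟨(revC hn0 i (by omega)).trans p, ?_⟩
              ext g
              rw [Finset.mem_insert, hE g, pathEdges_revC hn0 p hi g]
            · refine ⟨p, ?_⟩
              rw [← heui, ← huE, hup]
            · refine ⟨(revB hn0 i (by omega)).trans p, ?_⟩
              ext g
              rw [Finset.mem_insert, hE g, pathEdges_revB hn0 p hi g]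
          apply hreal
          rcases ha with ha' | ha' <;> rcases hb with hb' | hb' <;> rw [ha', hb']
          · exact Or.inl rfl
          · exact Or.inr (Or.inl rfl)
          · exact Or.inr (Or.inr (Or.inl rfl))
          · exact Or.inr (Or.inr (Or.inr rfl))
        · intro g1 hg1 g2 hg2
          rw [Finset.mem_insert] at hg1 hg2
          rcases hg1 with rfl | hg1 <;> rcases hg2 with rfl | hg2
          · exact crosses_irrefl _
          · exact hcross_fg g2 hg2
          · intro hc
            exact hcross_fg g1 hg1 (crosses_comm hc)
          · exact hNCu g1 (Finset.mem_inter.mp hg1).1 g2 (Finset.mem_inter.mp hg2).1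
    -- counting
    set XA : Finset (Fin n) :=
      ({vtx hn0 p 0, vtx hn0 p i} : Finset (Fin n)).filter FA with hXA2
    set YB : Finset (Fin n) :=
      ({vtx hn0 p (i+1), vtx hn0 p (n-1)} : Finset (Fin n)).filter FB with hYB2
    set T : Finset (Sym2 (Fin n)) := (XA ×ˢ YB).image (fun z => s(z.1, z.2)) with hT2
    have hXmem : ∀ x ∈ XA, ∃ a : ℕ, (a = 0 ∨ a = i) ∧ x = vtx hn0 p a ∧ FA x := by
      intro x hx
      rw [hXA2, Finset.mem_filter, Finset.mem_insert, Finset.mem_singleton] at hx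
      rcases hx.1 with rfl | rfl
      · exact ⟨0, Or.inl rfl, rfl, hx.2⟩
      · exact ⟨i, Or.inr rfl, rfl, hx.2⟩
    have hYmem : ∀ y ∈ YB, ∃ b : ℕ, (b = i + 1 ∨ b = n - 1) ∧ y = vtx hn0 p b ∧ FB y := by
      intro y hy
      rw [hYB2, Finset.mem_filter, Finset.mem_insert, Finset.mem_singleton] at hy
      rcases hy.1 with rfl | rfl
      · exact ⟨i+1, Or.inl rfl, rfl, hy.2⟩
      · exact ⟨n-1, Or.inr rfl, rfl, hy.2⟩
    have hmemT : ∀ e ∈ T, ∃ a b : ℕ, (a = 0 ∨ a = i) ∧ (b = i + 1 ∨ b = n - 1) ∧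
        e = s(vtx hn0 p a, vtx hn0 p b) ∧ FA (vtx hn0 p a) ∧ FB (vtx hn0 p b) := by
      intro e he
      rw [hT2, Finset.mem_image] at he
      obtain ⟨z, hz, rfl⟩ := he
      rw [Finset.mem_product] at hz
      obtain ⟨a, ha, hxz, hfa⟩ := hXmem z.1 hz.1
      obtain ⟨b, hb, hyz, hfb⟩ := hYmem z.2 hz.2
      exact ⟨a, b, ha, hb, by rw [hxz, hyz], by rw [← hxz]; exact hfa, by rw [← hyz]; exact hfb⟩
    have hTnotE : ∀ e ∈ T, e ∉ E := by
      intro e he heE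
      obtain ⟨a, b, ha, hb, rfl, -, -⟩ := hmemT e he
      obtain ⟨k, hk, hki, hkeq⟩ := (hE _).mp heE
      rw [Sym2.eq_iff] at hkeq
      rcases hkeq with ⟨h1, h2⟩ | ⟨h1, h2⟩
      · have e1 := (vtx_inj hn0 p (by omega) (by omega)).mp h1
        have e2 := (vtx_inj hn0 p (by omega) (by omega)).mp h2
        omega
      · have e1 := (vtx_inj hn0 p (by omega) (by omega)).mp h1
        have e2 := (vtx_inj hn0 p (by omega) (by omega)).mp h2
        omega
    set W : Finset (PVert n) := Finset.univ.filter (fun w => w ∈ interClique u v) with hW2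
    have hWiff : ∀ w : PVert n, w ∈ W ↔ w ∈ interClique u v := by
      intro w
      rw [hW2, Finset.mem_filter]
      simp
    have hWc : interClique u v = ↑W := by
      ext w
      rw [Finset.mem_coe, hWiff]
    have hTnc : ∀ e ∈ T, IsNCPath (insert e E) := by
      intro e he
      obtain ⟨a, b, ha, hb, rfl, hfa, hfb⟩ := hmemT e he
      exact (hvalid a b ha hb).mpr ⟨hfa, hfb⟩
    have hTW : T.card = W.card := by
      refine Finset.card_bij (fun e he => ⟨insert e E, hTnc e he⟩) ?_ ?_ ?_
      · intro e he
        refine (hWiff _).mpr ?_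
        exact ⟨e, hTnotE e he, rfl⟩
      · intro e1 h1 e2 h2 heq
        have heq' : insert e1 E = insert e2 E := congrArg Subtype.val heq
        have : e1 ∈ insert e2 E := heq' ▸ Finset.mem_insert_self e1 E
        rcases Finset.mem_insert.mp this with h | h
        · exact h
        · exact absurd h (hTnotE e1 h1)
      · intro w hw
        obtain ⟨e, heE, hw1, a, b, ha, hb, heab⟩ := hstruct w ((hWiff w).mp hw)
        have hnc : IsNCPath (insert s(vtx hn0 p a, vtx hn0 p b) E) := by
          rw [← heab, ← hw1]; exact w.2
        obtain ⟨hfa, hfb⟩ := (hvalid a b ha hb).mp hnc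
        have heT : e ∈ T := by
          rw [hT2, Finset.mem_image]
          refine ⟨(vtx hn0 p a, vtx hn0 p b), ?_, heab.symm⟩
          rw [Finset.mem_product]
          constructor
          · rw [hXA2, Finset.mem_filter, Finset.mem_insert, Finset.mem_singleton]
            constructor
            · rcases ha with rfl | rfl
              · exact Or.inl rfl
              · exact Or.inr rfl
            · exact hfa
          · rw [hYB2, Finset.mem_filter, Finset.mem_insert, Finset.mem_singleton]
            constructor
            · rcases hb with rfl | rfl
              · exact Or.inl rfl
              · exact Or.inr rfl
            · exact hfb
        exact ⟨e, heT, Subtype.ext hw1.symm⟩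
    have hinj : Set.InjOn (fun z : Fin n × Fin n => s(z.1, z.2)) ↑(XA ×ˢ YB) := by
      intro z1 h1 z2 h2 heq
      rw [Finset.mem_coe, Finset.mem_product] at h1 h2
      obtain ⟨a1, ha1, hx1, -⟩ := hXmem z1.1 h1.1
      obtain ⟨b1, hb1, hy1, -⟩ := hYmem z1.2 h1.2
      obtain ⟨a2, ha2, hx2, -⟩ := hXmem z2.1 h2.1
      obtain ⟨b2, hb2, hy2, -⟩ := hYmem z2.2 h2.2
      simp only at heq
      rw [Sym2.eq_iff] at heq
      rcases heq with ⟨e1, e2⟩ | ⟨e1, e2⟩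
      · exact Prod.ext e1 e2
      · exfalso
        rw [hx1, hy2] at e1
        have := (vtx_inj hn0 p (by omega) (by omega)).mp e1
        omega
    have hTcard : T.card = XA.card * YB.card := by
      rw [hT2, Finset.card_image_of_injOn hinj, Finset.card_product]
    have hXb : XA.card ≤ 2 := by
      rw [hXA2]
      refine le_trans (Finset.card_filter_le _ _) ?_
      refine (Finset.card_insert_le _ _).trans ?_
      simp
    have hYb : YB.card ≤ 2 := by
      rw [hYB2]
      refine le_trans (Finset.card_filter_le _ _) ?_
      refine (Finset.card_insert_le _ _).trans ?_
      simp
    have hWge : 2 ≤ W.card := by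
      have hsub : ({u, v} : Finset (PVert n)) ⊆ W := by
        intro w hw
        rcases Finset.mem_insert.mp hw with rfl | hw
        · exact (hWiff w).mpr huC
        · rw [Finset.mem_singleton] at hw
          subst hw
          exact (hWiff _).mpr hvC
      calc 2 = ({u, v} : Finset (PVert n)).card := (Finset.card_pair hne).symm
        _ ≤ W.card := Finset.card_le_card hsub
    rw [hWc, Set.ncard_coe_finset]
    have hprod : W.card = XA.card * YB.card := by rw [← hTW, hTcard]
    have hxcases : XA.card = 0 ∨ XA.card = 1 ∨ XA.card = 2 := by omega
    rcases hxcases with hx | hx | hx <;> rw [hx] at hprod <;> omega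
end PG
end
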